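/- arXiv:1907.04349 — 10 statements merged into one kernel-verified Lean document; each statement's English description precedes it below -/
import Mathlib

section
/- Let Γ be a connected signed graph whose adjacency matrix A has m distinct eigenvalues. Then the signed diameter of Γ is at most m - 1, where two vertices u and v are at signed distance k if their graph distance is k and the (u,v)-entry of A^k is nonzero, and the signed diameter is the maximum signed distance over all pairs (set to 0 for a pair when the relevant entry of A^k vanishes). -/
open Polynomial Matrix

/-- If the (u,v) entry of A^j is nonzero, there is a walk of length j, so dist ≤ j. -/
lemma aux_dist_le {n : ℕ} (G : SimpleGraph (Fin n)) [DecidableRel G.Adj]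
    (hconn : G.Connected) (A : Matrix (Fin n) (Fin n) ℝ)
    (hnadj : ∀ i j, ¬ G.Adj i j → A i j = 0) :
    ∀ (j : ℕ) (u v : Fin n), (A ^ j) u v ≠ 0 → G.dist u v ≤ j := by
  intro j
  induction j with
  | zero =>
    intro u v h
    simp only [pow_zero, Matrix.one_apply, ne_eq, ite_eq_right_iff, not_forall] at h
    rw [h.1, SimpleGraph.dist_self]
  | succ j ih =>
    intro u v h
    rw [pow_succ, Matrix.mul_apply] at h
    obtain ⟨w, -, hw⟩ := Finset.exists_ne_zero_of_sum_ne_zero h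
    have h1 : (A ^ j) u w ≠ 0 := fun h0 => hw (by rw [h0, zero_mul])
    have h2 : A w v ≠ 0 := fun h0 => hw (by rw [h0, mul_zero])
    have hadj : G.Adj w v := by
      by_contra hc; exact h2 (hnadj _ _ hc)
    calc G.dist u v ≤ G.dist u w + G.dist w v := hconn.dist_triangle
      _ ≤ j + 1 := by
          have := ih u w h1
          rw [SimpleGraph.dist_eq_one_iff_adj.2 hadj]
          omega

lemma aux_aeval_diagonal {n : ℕ} (d : Fin n → ℝ) (p : ℝ[X]) :
    aeval (Matrix.diagonal d) p = Matrix.diagonal (fun i => p.eval (d i)) := by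
  induction p using Polynomial.induction_on' with
  | add p q hp hq =>
    simp [map_add, hp, hq, Matrix.diagonal_add]
  | monomial k a =>
    simp only [aeval_monomial, Matrix.diagonal_pow, eval_monomial]
    rw [Matrix.algebraMap_eq_diagonal, Matrix.diagonal_mul_diagonal]
    simp [Pi.algebraMap_def]

/-- Let Γ be a connected signed graph whose adjacency matrix A has m distinct
eigenvalues.  Then the signed diameter of Γ is at most m - 1: whenever two vertices u, v at
graph distance k have (A^k) u v ≠ 0 (i.e. they are at signed distance k), then k ≤ m - 1. -/
theorem stmt_5 {n : ℕ} [NeZero n] (G : SimpleGraph (Fin n)) [DecidableRel G.Adj]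
    (hconn : G.Connected)
    (A : Matrix (Fin n) (Fin n) ℝ) (hA : A.IsSymm)
    (hadj : ∀ i j, G.Adj i j → (A i j = 1 ∨ A i j = -1))
    (hnadj : ∀ i j, ¬ G.Adj i j → A i j = 0)
    (hH : A.IsHermitian)
    (m : ℕ) (hm : m = (Finset.univ.image hH.eigenvalues).card) :
    ∀ u v : Fin n, (A ^ (G.dist u v)) u v ≠ 0 → G.dist u v ≤ m - 1 := by
  intro u v hne
  set k := G.dist u v with hk
  by_contra hcon
  -- m ≥ 1
  have hm1 : 1 ≤ m := by
    rw [hm]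
    refine Finset.card_pos.2 ?_
    exact (Finset.univ_nonempty).image _
  have hmk : m ≤ k := by omega
  -- the annihilating polynomial
  set S := Finset.univ.image hH.eigenvalues with hS
  set p : ℝ[X] := ∏ μ ∈ S, (X - C μ) with hp
  have hmonic : p.Monic := monic_prod_of_monic _ _ (fun μ _ => monic_X_sub_C μ)
  have hdeg : p.natDegree = m := by
    rw [hp, natDegree_prod _ _ (fun μ _ => X_sub_C_ne_zero μ), hm]
    simp [natDegree_X_sub_C]
  -- aeval A p = 0
  have hU := hH.spectral_theorem
  set U : Matrix (Fin n) (Fin n) ℝ := (hH.eigenvectorUnitary : Matrix (Fin n) (Fin n) ℝ) with hUdef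
  have hU1 : U * star U = 1 := Matrix.mem_unitaryGroup_iff.mp hH.eigenvectorUnitary.2
  set D : Matrix (Fin n) (Fin n) ℝ :=
    Matrix.diagonal (RCLike.ofReal ∘ hH.eigenvalues) with hD
  have hpow : ∀ j : ℕ, A ^ j = U * D ^ j * star U := by
    intro j
    induction j with
    | zero => simp [hU1]
    | succ j ih =>
      rw [pow_succ, ih, hU]
      have hU2 : star U * U = 1 := Matrix.mem_unitaryGroup_iff'.mp hH.eigenvectorUnitary.2
      calc U * D ^ j * star U * (U * D * star U)
          = U * D ^ j * (star U * U) * D * star U := by noncomm_ring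
        _ = U * D ^ (j + 1) * star U := by rw [hU2]; noncomm_ring [pow_succ]
  have haeval : ∀ q : ℝ[X], aeval A q = U * (aeval D q) * star U := by
    intro q
    rw [aeval_eq_sum_range (x := A), aeval_eq_sum_range (x := D)]
    rw [Finset.mul_sum, Finset.sum_mul]
    refine Finset.sum_congr rfl fun i _ => ?_
    rw [hpow i, Matrix.mul_smul, Matrix.smul_mul]
  have hDp : aeval D p = 0 := by
    rw [hD, aux_aeval_diagonal]
    have : ∀ i, p.eval ((RCLike.ofReal ∘ hH.eigenvalues) i) = 0 := by
      intro i
      rw [hp]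
      simp only [eval_prod, eval_sub, eval_X, eval_C]
      refine Finset.prod_eq_zero (i := hH.eigenvalues i) ?_ ?_
      · exact Finset.mem_image_of_mem _ (Finset.mem_univ i)
      · simp [RCLike.ofReal_real_eq_id]
    simp only [this]
    exact Matrix.diagonal_zero
  have hAp : aeval A p = 0 := by
    rw [haeval, hDp, mul_zero, zero_mul]
  -- reduce X^k mod p
  set r : ℝ[X] := (X ^ k : ℝ[X]) %ₘ p with hr
  have hAr : A ^ k = aeval A r := by
    have hxk : (aeval A) (X ^ k : ℝ[X]) = A ^ k := by simp
    rw [← hxk]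
    conv_lhs => rw [← modByMonic_add_div (X ^ k : ℝ[X]) p]
    rw [map_add, _root_.map_mul, hAp, zero_mul, add_zero]
  have hrdeg : r.natDegree < m := by
    have hp1 : p ≠ 1 := by
      intro h
      rw [h, natDegree_one] at hdeg
      omega
    have := natDegree_modByMonic_lt (X ^ k : ℝ[X]) hmonic hp1
    rw [← hr] at this
    omega
  -- low powers have zero (u,v) entry
  have hlow : ∀ i : ℕ, i < m → (A ^ i) u v = 0 := by
    intro i hi
    by_contra h0
    have := aux_dist_le G hconn A hnadj i u v h0
    omega
  have : (A ^ k) u v = 0 := by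
    rw [hAr, aeval_eq_sum_range' hrdeg, Matrix.sum_apply]
    refine Finset.sum_eq_zero fun i hi => ?_
    rw [Matrix.smul_apply, hlow i (Finset.mem_range.mp hi), smul_zero]
  exact hne this
end

section
/- If a signed graph Γ has an adjacency spectrum symmetric with respect to the origin, then the number of positive triangles in Γ equals the number of negative triangles in Γ. In particular, a signed graph containing in total an odd number of triangles cannot have symmetric spectrum (and hence cannot be sign-symmetric). -/
/-- If the adjacency spectrum of a signed graph is symmetric with respect to
the origin (the multiset of eigenvalues is invariant under λ ↦ -λ), then the number of
positive triangles equals the number of negative triangles.  In particular, a signed graph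
with an odd total number of triangles cannot have symmetric spectrum. -/
theorem stmt_6 {n : ℕ} (G : SimpleGraph (Fin n)) [DecidableRel G.Adj]
    (s : Fin n → Fin n → ℝ)
    (hssymm : ∀ i j, s i j = s j i)
    (hsign : ∀ i j, G.Adj i j → s i j = 1 ∨ s i j = -1)
    (A : Matrix (Fin n) (Fin n) ℝ)
    (hA : ∀ i j, A i j = if G.Adj i j then s i j else 0)
    (hH : A.IsHermitian)
    (hsymmspec : Multiset.map (fun x => -x) (Multiset.map hH.eigenvalues Finset.univ.val)
      = Multiset.map hH.eigenvalues Finset.univ.val)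
    (tri : Finset (Fin n × Fin n × Fin n))
    (htri : tri = Finset.univ.filter (fun t => t.1 < t.2.1 ∧ t.2.1 < t.2.2 ∧
      G.Adj t.1 t.2.1 ∧ G.Adj t.2.1 t.2.2 ∧ G.Adj t.1 t.2.2)) :
    (tri.filter (fun t => s t.1 t.2.1 * s t.2.1 t.2.2 * s t.1 t.2.2 = 1)).card
      = (tri.filter (fun t => s t.1 t.2.1 * s t.2.1 t.2.2 * s t.1 t.2.2 = -1)).card := by
  classical
  -- eigenvalue cube sum is zero
  have hev : ∑ i, (hH.eigenvalues i)^3 = 0 := by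
    have h1 := congrArg (fun m => (Multiset.map (fun x : ℝ => x^3) m).sum) hsymmspec
    simp only [Multiset.map_map, Function.comp] at h1
    have h2 : ∑ i, -((hH.eigenvalues i)^3) = ∑ i, (hH.eigenvalues i)^3 := by
      have e1 : (Multiset.map (fun x => (-hH.eigenvalues x) ^ 3) Finset.univ.val).sum
          = ∑ i, -((hH.eigenvalues i)^3) := by
        rw [show (fun x : Fin n => (-hH.eigenvalues x) ^ 3)
            = (fun x : Fin n => -((hH.eigenvalues x)^3)) from funext fun x => by ring]
        rfl
      rw [e1] at h1
      exact h1
    rw [Finset.sum_neg_distrib] at h2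
    linarith
  -- trace of A^3 equals sum of eigenvalue cubes
  have htrace : (A^3).trace = ∑ i, (hH.eigenvalues i)^3 := by
    set U : Matrix (Fin n) (Fin n) ℝ := (hH.eigenvectorUnitary : Matrix (Fin n) (Fin n) ℝ) with hUdef
    have hU' : star U * U = 1 := Unitary.coe_star_mul_self hH.eigenvectorUnitary
    set D : Matrix (Fin n) (Fin n) ℝ := Matrix.diagonal (RCLike.ofReal ∘ hH.eigenvalues) with hDdef
    have h3 : A^3 = U * (D * D * D) * star U := by
      rw [hH.spectral_theorem]
      simp only [pow_succ, pow_zero, one_mul, Unitary.conjStarAlgAut_apply, ← hUdef, ← hDdef]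
      simp only [Matrix.mul_assoc]
      rw [show star U * (U * (D * (star U * (U * (D * star U))))) = D * (D * star U) by
        rw [← Matrix.mul_assoc (star U) U, hU', Matrix.one_mul,
          ← Matrix.mul_assoc (star U) U, hU', Matrix.one_mul]]
    rw [h3, Matrix.trace_mul_cycle]
    rw [← Matrix.mul_assoc, hU', Matrix.one_mul]
    simp [D, Matrix.diagonal_mul_diagonal, Matrix.trace_diagonal, pow_succ]
  -- the entrywise formula for matrix entries on edges
  have hAe : ∀ x y, G.Adj x y → A x y = s x y := fun x y h => by rw [hA, if_pos h]
  have hAne : ∀ x y, ¬ G.Adj x y → A x y = 0 := fun x y h => by rw [hA, if_neg h]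
  -- F, the cyclic product
  set F : Fin n × Fin n × Fin n → ℝ :=
    fun p => A p.1 p.2.1 * A p.2.1 p.2.2 * A p.2.2 p.1 with hF
  set g : Fin n × Fin n × Fin n → ℝ :=
    fun t => s t.1 t.2.1 * s t.2.1 t.2.2 * s t.1 t.2.2 with hg
  -- trace as a triple sum
  have htr1 : (A^3).trace = ∑ p : Fin n × Fin n × Fin n, F p := by
    have hpow : A^3 = A * A * A := by rw [pow_succ, pow_succ, pow_one]
    rw [hpow]
    simp only [Matrix.trace, Matrix.diag, Matrix.mul_apply, Finset.sum_mul, hF,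
      Fintype.sum_prod_type]
    refine Finset.sum_congr rfl fun i _ => ?_
    rw [Finset.sum_comm]
  -- restrict to adjacency triples
  set T' : Finset (Fin n × Fin n × Fin n) :=
    Finset.univ.filter (fun p => G.Adj p.1 p.2.1 ∧ G.Adj p.2.1 p.2.2 ∧ G.Adj p.2.2 p.1) with hT'
  have htr2 : (∑ p : Fin n × Fin n × Fin n, F p) = ∑ p ∈ T', F p := by
    rw [hT']
    refine (Finset.sum_filter_of_ne ?_).symm
    intro p _ hne
    refine ⟨?_, ?_, ?_⟩
    · by_contra h; exact hne (by rw [hF]; simp only; rw [hAne _ _ h]; ring)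
    · by_contra h; exact hne (by rw [hF]; simp only; rw [hAne _ _ h]; ring)
    · by_contra h; exact hne (by rw [hF]; simp only; rw [hAne _ _ h]; ring)
  -- the six permutations of a sorted triangle
  set P6 : (Fin n × Fin n × Fin n) → Finset (Fin n × Fin n × Fin n) := fun u =>
    {(u.1, u.2.1, u.2.2), (u.2.1, u.2.2, u.1), (u.2.2, u.1, u.2.1),
     (u.1, u.2.2, u.2.1), (u.2.2, u.2.1, u.1), (u.2.1, u.1, u.2.2)} with hP6
  have hTsplit : T' = tri.biUnion P6 := by
    ext p
    simp only [hT', hP6, htri, Finset.mem_biUnion, Finset.mem_filter, Finset.mem_univ,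
      true_and, Finset.mem_insert, Finset.mem_singleton]
    constructor
    · rintro ⟨h1, h2, h3⟩
      obtain ⟨i, j, k⟩ := p
      simp only at h1 h2 h3
      have hij : i ≠ j := h1.ne
      have hjk : j ≠ k := h2.ne
      have hki : k ≠ i := h3.ne
      rcases lt_trichotomy i j with hij' | hij' | hij'
      · rcases lt_trichotomy j k with hjk' | hjk' | hjk'
        · exact ⟨(i, j, k), ⟨hij', hjk', h1, h2, G.adj_symm h3⟩, by tauto⟩
        · exact absurd hjk' hjk
        · rcases lt_trichotomy i k with hik' | hik' | hik'
          · exact ⟨(i, k, j), ⟨hik', hjk', G.adj_symm h3, G.adj_symm h2, h1⟩, by tauto⟩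
          · exact absurd hik'.symm hki
          · exact ⟨(k, i, j), ⟨hik', hij', h3, h1, G.adj_symm h2⟩, by tauto⟩
      · exact absurd hij' hij
      · rcases lt_trichotomy i k with hik' | hik' | hik'
        · exact ⟨(j, i, k), ⟨hij', hik', G.adj_symm h1, G.adj_symm h3, h2⟩, by tauto⟩
        · exact absurd hik'.symm hki
        · rcases lt_trichotomy j k with hjk' | hjk' | hjk'
          · exact ⟨(j, k, i), ⟨hjk', hik', h2, h3, G.adj_symm h1⟩, by tauto⟩
          · exact absurd hjk' hjk
          · exact ⟨(k, j, i), ⟨hjk', hij', G.adj_symm h2, G.adj_symm h1, h3⟩, by tauto⟩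
    · rintro ⟨⟨a, b, c⟩, ⟨hab, hbc, h1, h2, h3⟩, hp⟩
      simp only at hp h1 h2 h3
      rcases hp with rfl | rfl | rfl | rfl | rfl | rfl
      · exact ⟨h1, h2, G.adj_symm h3⟩
      · exact ⟨h2, G.adj_symm h3, h1⟩
      · exact ⟨G.adj_symm h3, h1, h2⟩
      · exact ⟨h3, G.adj_symm h2, G.adj_symm h1⟩
      · exact ⟨G.adj_symm h2, G.adj_symm h1, h3⟩
      · exact ⟨G.adj_symm h1, h3, G.adj_symm h2⟩
  -- disjointness of the permutation families
  have hdisj : (tri : Set (Fin n × Fin n × Fin n)).PairwiseDisjoint P6 := by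
    intro u hu v hv huv
    rw [Function.onFun, Finset.disjoint_left]
    intro p hpu hpv
    obtain ⟨a, b, c⟩ := u
    obtain ⟨a', b', c'⟩ := v
    rw [Finset.mem_coe, htri, Finset.mem_filter] at hu hv
    obtain ⟨-, hab, hbc, -⟩ := hu
    obtain ⟨-, hab', hbc', -⟩ := hv
    dsimp only at hab hbc hab' hbc'
    simp only [hP6, Finset.mem_insert, Finset.mem_singleton] at hpu hpv
    apply huv
    rcases hpu with rfl | rfl | rfl | rfl | rfl | rfl <;>
      (simp only [Prod.mk.injEq] at hpv ⊢; omega)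
  -- inner sums
  have hinner : ∀ u ∈ tri, ∑ p ∈ P6 u, F p = 6 * g u := by
    intro u hu
    obtain ⟨a, b, c⟩ := u
    rw [htri, Finset.mem_filter] at hu
    obtain ⟨-, hab, hbc, h1, h2, h3⟩ := hu
    dsimp only at h1 h2 h3 hab hbc
    rw [hP6]
    dsimp only
    rw [Finset.sum_insert (by simp [Prod.ext_iff]; omega),
      Finset.sum_insert (by simp [Prod.ext_iff]; omega),
      Finset.sum_insert (by simp [Prod.ext_iff]; omega),
      Finset.sum_insert (by simp [Prod.ext_iff]; omega),
      Finset.sum_insert (by simp [Prod.ext_iff]; omega),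
      Finset.sum_singleton]
    simp only [hF, hg]
    rw [hAe a b h1, hAe b c h2, hAe c a (G.adj_symm h3), hAe a c h3, hAe c b (G.adj_symm h2),
      hAe b a (G.adj_symm h1), hssymm b a, hssymm c b, hssymm c a]
    ring
  -- the trace identity
  have hsum : (6 : ℝ) * ∑ t ∈ tri, g t = 0 := by
    have : (A^3).trace = 6 * ∑ t ∈ tri, g t := by
      rw [htr1, htr2, hTsplit, Finset.sum_biUnion hdisj, Finset.sum_congr rfl hinner,
        ← Finset.mul_sum]
    rw [← this, htrace, hev]
  have hgsum : ∑ t ∈ tri, g t = 0 := by linarith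
  -- each triangle has product ±1
  have hpm : ∀ t ∈ tri, g t = 1 ∨ g t = -1 := by
    intro t ht
    rw [htri, Finset.mem_filter] at ht
    obtain ⟨-, -, -, h1, h2, h3⟩ := ht
    rw [hg]
    rcases hsign _ _ h1 with e1 | e1 <;> rcases hsign _ _ h2 with e2 | e2 <;>
      rcases hsign _ _ h3 with e3 | e3 <;> simp only [e1, e2, e3] <;> norm_num
  -- split the sum
  have hfeq : tri.filter (fun t => ¬ (g t = 1))
      = tri.filter (fun t => s t.1 t.2.1 * s t.2.1 t.2.2 * s t.1 t.2.2 = -1) := by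
    apply Finset.filter_congr
    intro t ht
    rcases hpm t ht with h | h <;> rw [hg] at h <;> simp [hg, h] <;> norm_num
  have hfeq1 : tri.filter (fun t => g t = 1)
      = tri.filter (fun t => s t.1 t.2.1 * s t.2.1 t.2.2 * s t.1 t.2.2 = 1) := by
    apply Finset.filter_congr
    intro t _
    rw [hg]
  have hsum1 : ∑ t ∈ tri.filter (fun t => g t = 1), g t
      = ((tri.filter (fun t => s t.1 t.2.1 * s t.2.1 t.2.2 * s t.1 t.2.2 = 1)).card : ℝ) := by
    rw [← hfeq1]
    rw [Finset.sum_congr rfl (fun t ht => (Finset.mem_filter.mp ht).2)]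
    simp
  have hsum2 : ∑ t ∈ tri.filter (fun t => ¬ (g t = 1)), g t
      = -((tri.filter (fun t => s t.1 t.2.1 * s t.2.1 t.2.2 * s t.1 t.2.2 = -1)).card : ℝ) := by
    rw [hfeq]
    rw [Finset.sum_congr rfl (fun t ht => (Finset.mem_filter.mp ht).2)]
    simp [mul_comm]
  have hfin : ((tri.filter (fun t => s t.1 t.2.1 * s t.2.1 t.2.2 * s t.1 t.2.2 = 1)).card : ℝ)
      = ((tri.filter (fun t => s t.1 t.2.1 * s t.2.1 t.2.2 * s t.1 t.2.2 = -1)).card : ℝ) := by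
    have h0 : ∑ t ∈ tri.filter (fun t => g t = 1), g t
        + ∑ t ∈ tri.filter (fun t => ¬ (g t = 1)), g t = 0 := by
      rw [Finset.sum_filter_add_sum_filter_not tri (fun t => g t = 1) g, hgsum]
    rw [hsum1, hsum2] at h0
    linarith
  exact_mod_cast hfin
end

section
/- Let Γ be a signed graph on n vertices with m edges and any signature σ. Then the spectral radius satisfies ρ(Γ) ≥ √(2m/n), i.e., ρ(Γ) ≥ √k where k is the average degree of the underlying graph. Equality holds if and only if A(Γ)² = k·I, i.e., A(Γ) is a symmetric weighing matrix of weight k (forcing the underlying graph to be k-regular). -/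
/-- Gregory's bound: For a signed graph Γ on n vertices with m edges, the
spectral radius satisfies ρ(Γ) ≥ √(2m/n) = √k where k is the average degree, with equality
if and only if A(Γ)² = k·I (i.e. A(Γ) is a symmetric weighing matrix of weight k). -/
theorem stmt_7 {n : ℕ} [NeZero n] (G : SimpleGraph (Fin n)) [DecidableRel G.Adj]
    (s : Fin n → Fin n → ℝ)
    (hssymm : ∀ i j, s i j = s j i)
    (hsign : ∀ i j, G.Adj i j → s i j = 1 ∨ s i j = -1)
    (A : Matrix (Fin n) (Fin n) ℝ)
    (hA : ∀ i j, A i j = if G.Adj i j then s i j else 0)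
    (hH : A.IsHermitian)
    (m : ℕ) (hm : m = G.edgeFinset.card)
    (ρ : ℝ) (hρ : ρ = Finset.univ.sup' Finset.univ_nonempty (fun i => |hH.eigenvalues i|)) :
    Real.sqrt (2 * m / n) ≤ ρ ∧
      (ρ = Real.sqrt (2 * m / n) ↔ A * A = (2 * (m : ℝ) / n) • (1 : Matrix (Fin n) (Fin n) ℝ)) := by
  have hn : (0:ℝ) < n := by exact_mod_cast Nat.pos_of_ne_zero (NeZero.ne n)
  set k : ℝ := 2 * (m:ℝ) / n with hk
  have hk0 : 0 ≤ k := by positivity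
  set U : Matrix (Fin n) (Fin n) ℝ := (hH.eigenvectorUnitary : Matrix (Fin n) (Fin n) ℝ) with hU
  set D : Matrix (Fin n) (Fin n) ℝ :=
    Matrix.diagonal (RCLike.ofReal ∘ hH.eigenvalues) with hDdef
  have hUU : star U * U = 1 := Unitary.coe_star_mul_self hH.eigenvectorUnitary
  have hUU' : U * star U = 1 := Unitary.coe_mul_star_self hH.eigenvectorUnitary
  have hD : star U * A * U = D := by
    have := hH.conjStarAlgAut_star_eigenvectorUnitary
    rwa [Unitary.conjStarAlgAut_star_apply] at this
  have hSpec : A = U * D * star U := hH.spectral_theorem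
  -- D entries are eigenvalues
  have hDeq : D = Matrix.diagonal hH.eigenvalues := by
    rw [hDdef, RCLike.ofReal_real_eq_id]; rfl
  -- A * A = U * (D * D) * star U
  have hAA : A * A = U * (D * D) * star U := by
    rw [hSpec]
    calc U * D * star U * (U * D * star U) = U * D * (star U * U) * D * star U := by
          noncomm_ring
      _ = U * (D * D) * star U := by rw [hUU]; noncomm_ring
  -- trace of A*A equals sum of squared eigenvalues
  have htr1 : (A * A).trace = ∑ i, hH.eigenvalues i ^ 2 := by
    rw [hAA, Matrix.trace_mul_cycle, ← Matrix.mul_assoc, hUU, Matrix.one_mul, hDeq,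
      Matrix.diagonal_mul_diagonal, Matrix.trace_diagonal]
    simp [sq]
  -- trace of A*A equals 2m
  have htr2 : (A * A).trace = 2 * (m:ℝ) := by
    rw [Matrix.trace]
    have : ∀ i, (A * A).diag i = (G.degree i : ℝ) := by
      intro i
      have : ∀ j, A i j * A j i = if G.Adj i j then (1:ℝ) else 0 := by
        intro j
        rw [hA, hA, hssymm j i]
        by_cases h : G.Adj i j
        · rw [if_pos h, if_pos h.symm, if_pos h]
          rcases hsign i j h with h1 | h1 <;> rw [h1] <;> norm_num
        · rw [if_neg h, if_neg (fun h' => h h'.symm), if_neg h, mul_zero]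
      rw [Matrix.diag_apply, Matrix.mul_apply]
      simp only [this]
      rw [Finset.sum_boole, SimpleGraph.degree, SimpleGraph.neighborFinset_eq_filter]
    simp only [this]
    rw [← Nat.cast_sum, SimpleGraph.sum_degrees_eq_twice_card_edges, ← hm]
    push_cast; ring
  have hsum : ∑ i, hH.eigenvalues i ^ 2 = (n:ℝ) * k := by
    rw [← htr1, htr2, hk]; field_simp
  have hρ0 : 0 ≤ ρ := by
    rw [hρ]
    exact le_trans (abs_nonneg _)
      (Finset.le_sup' (fun i => |hH.eigenvalues i|) (Finset.mem_univ (Classical.arbitrary (Fin n))))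
  have hev_le : ∀ i, hH.eigenvalues i ^ 2 ≤ ρ ^ 2 := by
    intro i
    have h1 : |hH.eigenvalues i| ≤ ρ := by
      rw [hρ]; exact Finset.le_sup' (fun i => |hH.eigenvalues i|) (Finset.mem_univ i)
    calc hH.eigenvalues i ^ 2 = |hH.eigenvalues i| ^ 2 := (sq_abs _).symm
      _ ≤ ρ ^ 2 := pow_le_pow_left₀ (abs_nonneg _) h1 2
  have hkle : k ≤ ρ ^ 2 := by
    have : (n:ℝ) * k ≤ (n:ℝ) * ρ ^ 2 := by
      rw [← hsum]
      calc ∑ i, hH.eigenvalues i ^ 2 ≤ ∑ _i : Fin n, ρ ^ 2 :=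
            Finset.sum_le_sum (fun i _ => hev_le i)
        _ = (n:ℝ) * ρ ^ 2 := by rw [Finset.sum_const, Finset.card_univ]; simp [mul_comm]
    exact le_of_mul_le_mul_left this hn
  have hmain : Real.sqrt k ≤ ρ := by
    calc Real.sqrt k ≤ Real.sqrt (ρ ^ 2) := Real.sqrt_le_sqrt hkle
      _ = ρ := by rw [Real.sqrt_sq hρ0]
  refine ⟨hmain, ?_, ?_⟩
  · -- equality → A*A = k • 1
    intro heq
    have hρ2 : ρ ^ 2 = k := by rw [heq, Real.sq_sqrt hk0]
    have hall : ∀ i, hH.eigenvalues i ^ 2 = k := by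
      have hs : ∑ i, hH.eigenvalues i ^ 2 = ∑ _i : Fin n, k := by
        rw [hsum, Finset.sum_const, Finset.card_univ]; simp [mul_comm]
      have := (Finset.sum_eq_sum_iff_of_le
        (fun i _ => (hev_le i).trans_eq hρ2)).mp hs
      exact fun i => this i (Finset.mem_univ i)
    have hDD : D * D = k • (1 : Matrix (Fin n) (Fin n) ℝ) := by
      have hfun : (fun i => hH.eigenvalues i * hH.eigenvalues i) = fun _ : Fin n => k :=
        funext fun i => by simpa [sq] using hall i
      rw [hDeq, Matrix.diagonal_mul_diagonal, hfun, Matrix.smul_one_eq_diagonal]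
    rw [hAA, hDD, Matrix.mul_smul, Matrix.smul_mul, Matrix.mul_one, hUU']
  · -- A*A = k • 1 → equality
    intro heq
    have hDD : D * D = k • (1 : Matrix (Fin n) (Fin n) ℝ) := by
      have : D * D = star U * (A * A) * U := by
        rw [← hD]
        calc star U * A * U * (star U * A * U)
            = star U * A * (U * star U) * A * U := by noncomm_ring
          _ = star U * (A * A) * U := by rw [hUU']; noncomm_ring
      rw [this, heq, Matrix.mul_smul, Matrix.smul_mul, Matrix.mul_one, hUU]
    have hall : ∀ i, hH.eigenvalues i ^ 2 = k := by
      intro i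
      have := congrFun (congrFun hDD i) i
      rw [hDeq, Matrix.diagonal_mul_diagonal] at this
      simpa [Matrix.diagonal_apply_eq, Matrix.smul_apply, Matrix.one_apply_eq, sq] using this
    have habs : ∀ i, |hH.eigenvalues i| = Real.sqrt k := by
      intro i
      rw [← hall i, Real.sqrt_sq_eq_abs]
    rw [hρ]
    calc Finset.univ.sup' Finset.univ_nonempty (fun i => |hH.eigenvalues i|)
        = Finset.univ.sup' Finset.univ_nonempty (fun _ => Real.sqrt k) := by
          apply Finset.sup'_congr _ rfl (fun i _ => habs i)
      _ = Real.sqrt k := Finset.sup'_const _ _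
end

section
/- For any signature σ of the complete graph K_n, the spectral radius satisfies ρ(K_n, σ) ≥ √(n-1), with equality if and only if A_σ is a symmetric conference matrix of order n (a symmetric {0,±1}-matrix with zero diagonal, ±1 off-diagonal, satisfying A_σ² = (n-1)I). -/
/-- For any signature σ of the complete graph K_n (adjacency matrix A with zero
diagonal and ±1 off-diagonal entries, symmetric), the spectral radius satisfies
ρ(K_n,σ) ≥ √(n-1), with equality if and only if A is a symmetric conference matrix of order
n, i.e. A² = (n-1)·I. -/
theorem stmt_8 {n : ℕ} [NeZero n]
    (A : Matrix (Fin n) (Fin n) ℝ) (hA : A.IsSymm)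
    (hdiag : ∀ i, A i i = 0)
    (hoff : ∀ i j, i ≠ j → (A i j = 1 ∨ A i j = -1))
    (hH : A.IsHermitian)
    (ρ : ℝ) (hρ : ρ = Finset.univ.sup' Finset.univ_nonempty (fun i => |hH.eigenvalues i|)) :
    Real.sqrt (n - 1) ≤ ρ ∧
      (ρ = Real.sqrt (n - 1) ↔ A * A = ((n : ℝ) - 1) • (1 : Matrix (Fin n) (Fin n) ℝ)) := by
  classical
  have hn0 : 0 < (n : ℝ) := by exact_mod_cast Nat.pos_of_ne_zero (NeZero.ne n)
  have hn1 : (0 : ℝ) ≤ (n : ℝ) - 1 := by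
    have : (1 : ℝ) ≤ (n : ℝ) := by exact_mod_cast Nat.one_le_iff_ne_zero.mpr (NeZero.ne n)
    linarith
  set lam := hH.eigenvalues with hlam
  set U : Matrix (Fin n) (Fin n) ℝ := (hH.eigenvectorUnitary : Matrix (Fin n) (Fin n) ℝ)
    with hUdef
  have hUU : star U * U = 1 := Unitary.coe_star_mul_self _
  have hUU' : U * star U = 1 := Unitary.coe_mul_star_self _
  have hDiag : Matrix.diagonal (RCLike.ofReal ∘ lam) = Matrix.diagonal lam := by
    congr 1
  have hspec : A = U * Matrix.diagonal lam * star U := by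
    have := hH.spectral_theorem
    rw [hDiag] at this
    exact this
  have hDD : Matrix.diagonal lam * Matrix.diagonal lam
      = Matrix.diagonal (fun i => lam i * lam i) := by
    rw [Matrix.diagonal_mul_diagonal]
  have hA2 : A * A = U * Matrix.diagonal (fun i => lam i * lam i) * star U := by
    conv_lhs => rw [hspec]
    rw [← hDD]
    simp only [mul_assoc]
    rw [← mul_assoc (star U) U, hUU, one_mul]
  -- trace of A * A, eigenvalue side
  have htr1 : (A * A).trace = ∑ i, lam i * lam i := by
    rw [hA2, Matrix.trace_mul_cycle, hUU, one_mul, Matrix.trace_diagonal]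
  -- trace of A * A, entrywise side
  have hentry : ∀ i j, A i j * A j i = if i = j then 0 else 1 := by
    intro i j
    by_cases h : i = j
    · simp [h, hdiag]
    · have hji : A j i = A i j := by
        have := congrFun (congrFun hA j) i
        simpa [Matrix.transpose_apply] using this.symm
      rw [hji, if_neg h]
      rcases hoff i j h with h1 | h1 <;> rw [h1] <;> ring
  have htr2 : (A * A).trace = (n : ℝ) * ((n : ℝ) - 1) := by
    rw [Matrix.trace]
    have hrow : ∀ i : Fin n, (A * A).diag i = (n : ℝ) - 1 := by
      intro i
      simp only [Matrix.diag_apply, Matrix.mul_apply]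
      calc ∑ j, A i j * A j i = ∑ j : Fin n, (1 - if i = j then (1:ℝ) else 0) := by
            apply Finset.sum_congr rfl
            intro j _
            rw [hentry i j]
            by_cases h : i = j <;> simp [h]
        _ = (n : ℝ) - 1 := by
            rw [Finset.sum_sub_distrib, Finset.sum_const, Finset.sum_ite_eq]
            simp
    rw [Finset.sum_congr rfl (fun i _ => hrow i), Finset.sum_const]
    simp [mul_comm]
  have hsum : ∑ i, lam i * lam i = (n : ℝ) * ((n : ℝ) - 1) := by rw [← htr1, htr2]
  -- basic facts about ρ
  have hle : ∀ i, |lam i| ≤ ρ := by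
    intro i
    rw [hρ]
    exact Finset.le_sup' (fun i => |lam i|) (Finset.mem_univ i)
  have hρ0 : 0 ≤ ρ := le_trans (abs_nonneg _) (hle ⟨0, Nat.pos_of_ne_zero (NeZero.ne n)⟩)
  have hρsq : (n : ℝ) - 1 ≤ ρ ^ 2 := by
    have hbound : ∀ i ∈ Finset.univ, lam i * lam i ≤ ρ ^ 2 := by
      intro i _
      have := hle i
      calc lam i * lam i = |lam i| ^ 2 := by rw [sq_abs]; ring
        _ ≤ ρ ^ 2 := pow_le_pow_left₀ (abs_nonneg _) this 2
    have := Finset.sum_le_sum hbound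
    rw [hsum, Finset.sum_const, Finset.card_univ, Fintype.card_fin, nsmul_eq_mul] at this
    nlinarith
  have hpart1 : Real.sqrt ((n : ℝ) - 1) ≤ ρ := by
    calc Real.sqrt ((n : ℝ) - 1) ≤ Real.sqrt (ρ ^ 2) := Real.sqrt_le_sqrt hρsq
      _ = ρ := by rw [Real.sqrt_sq hρ0]
  refine ⟨hpart1, ?_, ?_⟩
  · -- equality implies conference
    intro heq
    have hρ2 : ρ ^ 2 = (n : ℝ) - 1 := by
      rw [heq, Real.sq_sqrt hn1]
    have hall : ∀ i ∈ Finset.univ, lam i * lam i = (n : ℝ) - 1 := by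
      have hle' : ∀ i ∈ Finset.univ, lam i * lam i ≤ (n : ℝ) - 1 := by
        intro i _
        have := hle i
        calc lam i * lam i = |lam i| ^ 2 := by rw [sq_abs]; ring
          _ ≤ ρ ^ 2 := pow_le_pow_left₀ (abs_nonneg _) this 2
          _ = (n : ℝ) - 1 := hρ2
      have hsum' : ∑ i : Fin n, lam i * lam i = ∑ _i : Fin n, ((n : ℝ) - 1) := by
        rw [hsum, Finset.sum_const, Finset.card_univ, Fintype.card_fin, nsmul_eq_mul]
      exact fun i hi => (Finset.sum_eq_sum_iff_of_le hle').mp hsum' i hi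
    have hDconst : Matrix.diagonal (fun i => lam i * lam i)
        = ((n : ℝ) - 1) • (1 : Matrix (Fin n) (Fin n) ℝ) := by
      ext i j
      rcases eq_or_ne i j with h | h
      · subst h
        simpa [Matrix.smul_apply, Matrix.one_apply_eq, Matrix.diagonal_apply_eq]
          using hall i (Finset.mem_univ i)
      · simp [Matrix.diagonal_apply_ne _ h, Matrix.smul_apply, Matrix.one_apply_ne h]
    rw [hA2, hDconst, Matrix.mul_smul, Matrix.smul_mul, mul_one, hUU']
  · -- conference implies equality
    intro hC
    have hDeq : Matrix.diagonal (fun i => lam i * lam i)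
        = ((n : ℝ) - 1) • (1 : Matrix (Fin n) (Fin n) ℝ) := by
      have h1 : star U * (A * A) * U = Matrix.diagonal (fun i => lam i * lam i) := by
        rw [hA2]
        calc star U * (U * Matrix.diagonal (fun i => lam i * lam i) * star U) * U
            = (star U * U) * Matrix.diagonal (fun i => lam i * lam i) * (star U * U) := by
              simp only [mul_assoc]
          _ = _ := by rw [hUU, one_mul, mul_one]
      rw [hC] at h1
      rw [← h1, Matrix.mul_smul, Matrix.smul_mul, mul_one, hUU]
    have hlam2 : ∀ i, lam i * lam i = (n : ℝ) - 1 := by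
      intro i
      have := congrFun (congrFun hDeq i) i
      simpa [Matrix.diagonal_apply_eq, Matrix.one_apply_eq, Matrix.smul_apply] using this
    have habs : ∀ i : Fin n, |lam i| = Real.sqrt ((n : ℝ) - 1) := by
      intro i
      rw [← Real.sqrt_sq_eq_abs]
      congr 1
      rw [sq, hlam2 i]
    rw [hρ]
    rw [Finset.sup'_congr Finset.univ_nonempty rfl (fun i _ => habs i)]
    exact Finset.sup'_const _ _
end

section
/- Define matrices A_n recursively by A_1 = [[0,1],[1,0]] and A_{n+1} = [[A_n, I],[I, -A_n]] (block matrix of size 2^{n+1}). Then A_n² = n·I_{2^n} for all n ≥ 1, and hence the eigenvalues of A_n are ±√n, each with multiplicity 2^{n-1}. -/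
/-- Huang's signed adjacency matrices of hypercubes: A_0 is the 1×1 zero matrix and
A_{n+1} = [[A_n, I],[I, -A_n]] (so A_1 = [[0,1],[1,0]]). -/
noncomputable def huangMatrix : (n : ℕ) → Matrix (Fin (2 ^ n)) (Fin (2 ^ n)) ℝ
  | 0 => 0
  | n + 1 =>
    Matrix.reindex
      ((finSumFinEquiv).trans (finCongr (by rw [pow_succ]; omega)))
      ((finSumFinEquiv).trans (finCongr (by rw [pow_succ]; omega)))
      (Matrix.fromBlocks (huangMatrix n) 1 1 (-(huangMatrix n)))

open Polynomial Matrix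

lemma huang_sq : ∀ n, huangMatrix n * huangMatrix n =
    (n : ℝ) • (1 : Matrix (Fin (2 ^ n)) (Fin (2 ^ n)) ℝ)
  | 0 => by simp [huangMatrix]
  | n + 1 => by
    rw [huangMatrix, Matrix.reindex_apply, Matrix.submatrix_mul_equiv,
      Matrix.fromBlocks_multiply, huang_sq n]
    have h1 : (huangMatrix n) * 1 + 1 * -(huangMatrix n) = 0 := by noncomm_ring
    have h2 : 1 * (huangMatrix n) + -(huangMatrix n) * 1 = 0 := by noncomm_ring
    have h3 : (n:ℝ) • (1 : Matrix (Fin (2 ^ n)) (Fin (2 ^ n)) ℝ) + 1 * 1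
        = ((n:ℝ)+1) • 1 := by
      rw [Matrix.mul_one, add_smul, one_smul]
    have h4 : (1 : Matrix (Fin (2 ^ n)) (Fin (2 ^ n)) ℝ) * 1 + -(huangMatrix n) * -(huangMatrix n)
        = ((n:ℝ)+1) • 1 := by
      rw [Matrix.mul_one, Matrix.neg_mul, Matrix.mul_neg, neg_neg, huang_sq n, add_smul, one_smul,
        add_comm]
    rw [h1, h2, h3, h4,
      show (0 : Matrix (Fin (2^n)) (Fin (2^n)) ℝ) = ((n:ℝ)+1) • 0 from (smul_zero _).symm,
      ← Matrix.fromBlocks_smul, Matrix.fromBlocks_one]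
    ext i j
    by_cases h : i = j
    · simp [h, Matrix.one_apply]
    · simp [h, Matrix.one_apply]


lemma huang_charpoly (n : ℕ) :
    (huangMatrix (n + 1)).charpoly = (X ^ 2 - C ((n : ℝ) + 1)) ^ 2 ^ n := by
  rw [huangMatrix, Matrix.charpoly_reindex]
  set A := huangMatrix n with hA
  rw [Matrix.charpoly, Matrix.charmatrix_fromBlocks]
  set P := charmatrix A with hP
  set S := charmatrix (-A) with hS
  have hQ : -((1 : Matrix (Fin (2^n)) (Fin (2^n)) ℝ).map C) = (-1 : Matrix _ _ ℝ[X]) := by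
    ext i j
    simp [Matrix.map_apply, Matrix.one_apply, apply_ite C]
  rw [hQ]
  set B := A.map (C : ℝ →+* ℝ[X]) with hB
  have hP' : P = (X : ℝ[X]) • 1 - B := by
    ext i j
    simp [hP, Matrix.charmatrix_apply, Matrix.one_apply, Matrix.diagonal_apply, mul_ite,
      Matrix.map_apply, hB]
  have hS' : S = (X : ℝ[X]) • 1 + B := by
    ext i j
    simp [hS, Matrix.charmatrix_apply, Matrix.one_apply, Matrix.diagonal_apply, mul_ite,
      sub_neg_eq_add, Matrix.map_apply, hB]
  have hBB : B * B = (C ((n:ℝ)) : ℝ[X]) • 1 := by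
    rw [hB, ← Matrix.map_mul, huang_sq n]
    ext i j
    simp [Matrix.map_apply, Matrix.one_apply, apply_ite C, mul_ite]
  have hPS : P * S - 1 = (X ^ 2 - C ((n:ℝ) + 1)) • (1 : Matrix (Fin (2^n)) (Fin (2^n)) ℝ[X]) := by
    rw [hP', hS']
    have e1 : ((X:ℝ[X]) • 1 - B) * ((X:ℝ[X]) • 1 + B) = (X*X : ℝ[X]) • 1 - B * B := by
      simp only [sub_mul, mul_add, Matrix.smul_mul, Matrix.mul_smul, Matrix.one_mul,
        Matrix.mul_one, smul_smul]
      abel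
    rw [e1, hBB, show (1 : Matrix (Fin (2^n)) (Fin (2^n)) ℝ[X]) = (1:ℝ[X]) • 1
      from (one_smul _ _).symm]
    rw [smul_smul, smul_smul, ← sub_smul, ← sub_smul]
    congr 1
    simp only [mul_one]
    · rw [Polynomial.C_add, Polynomial.C_1]
      ring
    · rw [one_smul]
  have hdetS : S.det ≠ 0 := by
    have : S.det = (-A).charpoly := rfl
    rw [this]
    exact ((-A).charpoly_monic).ne_zero
  have hm : Matrix.fromBlocks P (-1) (-1) S *
      Matrix.fromBlocks S (0 : Matrix (Fin (2^n)) (Fin (2^n)) ℝ[X]) 1 1 =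
      Matrix.fromBlocks (P * S - 1) (-1) (0 : Matrix (Fin (2^n)) (Fin (2^n)) ℝ[X]) S := by
    simp [Matrix.fromBlocks_multiply, sub_eq_add_neg]
  have key : (Matrix.fromBlocks P (-1) (-1) S).det * S.det = (P * S - 1).det * S.det := by
    calc (Matrix.fromBlocks P (-1) (-1) S).det * S.det
        = (Matrix.fromBlocks P (-1) (-1) S).det *
            (Matrix.fromBlocks S (0 : Matrix (Fin (2^n)) (Fin (2^n)) ℝ[X]) 1 1).det := by
          rw [Matrix.det_fromBlocks_zero₁₂, Matrix.det_one, mul_one]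
      _ = (Matrix.fromBlocks (P * S - 1) (-1) (0 : Matrix (Fin (2^n)) (Fin (2^n)) ℝ[X]) S).det := by
          rw [← Matrix.det_mul, hm]
      _ = (P * S - 1).det * S.det := by rw [Matrix.det_fromBlocks_zero₂₁]
  have hfin := mul_right_cancel₀ hdetS key
  rw [hfin, hPS, Matrix.det_smul, Matrix.det_one, mul_one]
  simp [Fintype.card_fin]

/-- For all n ≥ 1, A_n² = n·I, and hence the eigenvalues of A_n are ±√n, each
with multiplicity 2^{n-1}: the characteristic polynomial is (X - √n)^{2^{n-1}}·(X + √n)^{2^{n-1}}. -/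
theorem stmt_9 (n : ℕ) (hn : 1 ≤ n) :
    huangMatrix n * huangMatrix n = (n : ℝ) • (1 : Matrix (Fin (2 ^ n)) (Fin (2 ^ n)) ℝ) ∧
      (huangMatrix n).charpoly =
        (Polynomial.X - Polynomial.C (Real.sqrt n)) ^ (2 ^ (n - 1)) *
          (Polynomial.X + Polynomial.C (Real.sqrt n)) ^ (2 ^ (n - 1)) := by
  obtain ⟨m, rfl⟩ : ∃ m, n = m + 1 := ⟨n - 1, (Nat.succ_pred_eq_of_pos hn).symm⟩
  refine ⟨huang_sq (m + 1), ?_⟩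
  rw [huang_charpoly m, Nat.add_sub_cancel, ← mul_pow]
  congr 1
  have h1 : (Real.sqrt ((m + 1 : ℕ) : ℝ)) ^ 2 = ((m : ℝ) + 1) := by
    rw [Real.sq_sqrt (by positivity)]
    push_cast
    ring
  rw [show ((m : ℝ) + 1) = Real.sqrt ((m + 1 : ℕ) : ℝ) ^ 2 from h1.symm, map_pow]
  ring
end

section
/- Let G be a graph with n vertices. The average, over all 2^{|E(G)|} signatures σ of G, of the characteristic polynomials of the signed adjacency matrices A_σ equals the matching polynomial μ_G(x) = ∑_{k≥0} (-1)^k m_k x^{n-2k}, where m_k is the number of k-edge matchings of G. -/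
open Finset Polynomial Equiv

namespace GG

variable {α : Type*} [DecidableEq α]

/-- The transposition associated to an unordered pair. -/
def swapEdge : Sym2 α → Equiv.Perm α :=
  Sym2.lift ⟨fun a b => Equiv.swap a b, fun a b => Equiv.swap_comm a b⟩

@[simp] lemma swapEdge_mk (a b : α) : swapEdge s(a, b) = Equiv.swap a b := rfl

lemma swapEdge_apply_not_mem {e : Sym2 α} {x : α} (hx : x ∉ e) : swapEdge e x = x := by
  induction e using Sym2.ind with
  | _ a b =>
    simp only [Sym2.mem_iff, not_or] at hx
    simp [Equiv.swap_apply_of_ne_of_ne hx.1 hx.2]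

/-- Pairwise vertex-disjointness predicate for a finite set of unordered pairs. -/
def Disj (M : Finset (Sym2 α)) : Prop :=
  ∀ e ∈ M, ∀ f ∈ M, e ≠ f → ∀ v : α, ¬(v ∈ e ∧ v ∈ f)

lemma Disj.mono {M N : Finset (Sym2 α)} (h : Disj N) (hMN : M ⊆ N) : Disj M :=
  fun e he f hf => h e (hMN he) f (hMN hf)

lemma commute_swapEdge {e f : Sym2 α} (h : ∀ v : α, ¬(v ∈ e ∧ v ∈ f)) :
    Commute (swapEdge e) (swapEdge f) := by
  induction e using Sym2.ind with
  | _ a b =>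
    induction f using Sym2.ind with
    | _ c d =>
      apply Equiv.Perm.Disjoint.commute
      intro x
      by_cases hx : x = a ∨ x = b
      · right
        have hc : x ≠ c := fun hxc => h x ⟨Sym2.mem_iff.2 hx, by simp [hxc]⟩
        have hd : x ≠ d := fun hxd => h x ⟨Sym2.mem_iff.2 hx, by simp [hxd]⟩
        simpa using Equiv.swap_apply_of_ne_of_ne hc hd
      · left
        push_neg at hx
        simpa using Equiv.swap_apply_of_ne_of_ne hx.1 hx.2

/-- The permutation (an involution) associated to a vertex-disjoint set of edges. -/
def permM (M : Finset (Sym2 α)) (h : Disj M) : Equiv.Perm α :=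
  M.noncommProd swapEdge (fun e he f hf hef =>
    commute_swapEdge (h e (Finset.mem_coe.mp he) f (Finset.mem_coe.mp hf) hef))

open scoped Classical in
noncomputable def permOf (M : Finset (Sym2 α)) : Equiv.Perm α :=
  if h : Disj M then permM M h else 1

lemma permOf_eq {M : Finset (Sym2 α)} (h : Disj M) : permOf M = permM M h := by
  simp only [permOf, dif_pos h]

lemma permM_insert {M : Finset (Sym2 α)} {e : Sym2 α} (he : e ∉ M)
    (h : Disj (insert e M)) :
    permM (insert e M) h = swapEdge e * permM M (h.mono (Finset.subset_insert e M)) :=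
  Finset.noncommProd_insert_of_notMem M e swapEdge _ he

lemma permM_apply_not_mem {M : Finset (Sym2 α)} (h : Disj M) {a : α}
    (ha : ∀ e ∈ M, a ∉ e) : permM M h a = a := by
  induction M using Finset.induction_on with
  | empty => rfl
  | @insert e M he ih =>
    rw [permM_insert he h]
    have h1 : permM M (h.mono (Finset.subset_insert e M)) a = a :=
      ih _ fun f hf => ha f (Finset.mem_insert_of_mem hf)
    simp only [Equiv.Perm.mul_apply, h1]
    exact swapEdge_apply_not_mem (ha e (Finset.mem_insert_self e M))

lemma permM_apply_mem {M : Finset (Sym2 α)} (h : Disj M) {a b : α}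
    (hab : s(a, b) ∈ M) : permM M h a = b := by
  induction M using Finset.induction_on with
  | empty => simp at hab
  | @insert e M he ih =>
    rw [permM_insert he h]
    rcases Finset.mem_insert.mp hab with heq | hmem
    · have h1 : permM M (h.mono (Finset.subset_insert e M)) a = a := by
        apply permM_apply_not_mem
        intro f hf haf
        exact h e (Finset.mem_insert_self e M) f (Finset.mem_insert_of_mem hf)
          (fun hef => he (hef ▸ hf)) a ⟨heq ▸ Sym2.mem_mk_left a b, haf⟩
      simp only [Equiv.Perm.mul_apply, h1, ← heq, swapEdge_mk, Equiv.swap_apply_left]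
    · have h1 : permM M (h.mono (Finset.subset_insert e M)) a = b := ih _ hmem
      simp only [Equiv.Perm.mul_apply, h1]
      apply swapEdge_apply_not_mem
      intro hbe
      exact h e (Finset.mem_insert_self e M) s(a, b) (Finset.mem_insert_of_mem hmem)
        (fun hef => he (hef ▸ hmem)) b ⟨hbe, Sym2.mem_mk_right a b⟩

lemma sign_permM {M : Finset (Sym2 α)} [Fintype α] (h : Disj M)
    (hnd : ∀ e ∈ M, ¬ e.IsDiag) : Equiv.Perm.sign (permM M h) = (-1) ^ M.card := by
  induction M using Finset.induction_on with
  | empty => show Equiv.Perm.sign (1 : Equiv.Perm α) = (-1) ^ (∅ : Finset (Sym2 α)).card; simp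
  | @insert e M he ih =>
    rw [permM_insert he h, map_mul, ih _ (fun f hf => hnd f (Finset.mem_insert_of_mem hf)),
      Finset.card_insert_of_notMem he, pow_succ]
    have hd := hnd e (Finset.mem_insert_self e M)
    induction e using Sym2.ind with
    | _ a b =>
      have hab : a ≠ b := by simpa using hd
      rw [swapEdge_mk, Equiv.Perm.sign_swap hab, mul_comm]

lemma permM_ne_iff {M : Finset (Sym2 α)} (h : Disj M)
    (hnd : ∀ e ∈ M, ¬ e.IsDiag) (a : α) :
    permM M h a ≠ a ↔ ∃ e ∈ M, a ∈ e := by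
  constructor
  · intro hne
    by_contra hcon
    push_neg at hcon
    exact hne (permM_apply_not_mem h hcon)
  · rintro ⟨e, he, hae⟩
    have hother := Sym2.other_spec hae
    have hmem : s(a, Sym2.Mem.other hae) ∈ M := by rw [hother]; exact he
    rw [permM_apply_mem h hmem]
    intro heq
    apply hnd e he
    rw [← hother, heq]
    exact Sym2.mk_isDiag_iff.mpr rfl

lemma card_moved {M : Finset (Sym2 α)} [Fintype α] (h : Disj M)
    (hnd : ∀ e ∈ M, ¬ e.IsDiag) :
    (Finset.univ.filter fun a => permM M h a ≠ a).card = 2 * M.card := by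
  have hset : (Finset.univ.filter fun a => permM M h a ≠ a)
      = M.biUnion (fun e => Finset.univ.filter (· ∈ e)) := by
    ext a
    simp [permM_ne_iff h hnd]
  rw [hset, Finset.card_biUnion]
  · rw [Finset.sum_congr rfl (g := fun _ => 2), Finset.sum_const, smul_eq_mul, mul_comm]
    intro e he
    induction e using Sym2.ind with
    | _ x y =>
      have hxy : x ≠ y := by simpa using hnd _ he
      have : (Finset.univ.filter (· ∈ s(x, y))) = {x, y} := by
        ext a; simp [Sym2.mem_iff]
      rw [this, Finset.card_insert_of_notMem (by simpa using hxy), Finset.card_singleton]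
  · intro e he f hf hef
    rw [Function.onFun, Finset.disjoint_left]
    intro a hae haf
    simp only [Finset.mem_filter] at hae haf
    exact h e he f hf hef a ⟨hae.2, haf.2⟩

end GG

open GG

section Graph

variable {n : ℕ} (G : SimpleGraph (Fin n)) [DecidableRel G.Adj]

/-- The signed adjacency matrix. -/
def sA (σ : G.edgeFinset → Bool) : Matrix (Fin n) (Fin n) ℝ :=
  Matrix.of (fun i j : Fin n =>
    if h : G.Adj i j then (if σ ⟨s(i, j), by simpa using h⟩ then (1 : ℝ) else -1) else 0)

lemma sA_diag (σ : G.edgeFinset → Bool) (i : Fin n) : sA G σ i i = 0 := by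
  simp [sA, G.irrefl]

lemma sA_symm (σ : G.edgeFinset → Bool) (i j : Fin n) : sA G σ i j = sA G σ j i := by
  by_cases h : G.Adj i j
  · have h' : G.Adj j i := h.symm
    have key : (⟨s(i, j), by simpa using h⟩ : G.edgeFinset)
        = ⟨s(j, i), by simpa using h'⟩ := Subtype.ext (Sym2.eq_swap)
    simp only [sA, Matrix.of_apply, dif_pos h, dif_pos h', key]
  · have h' : ¬ G.Adj j i := fun hc => h hc.symm
    simp [sA, h, h']

lemma sA_sq (σ : G.edgeFinset → Bool) {i j : Fin n} (h : G.Adj i j) :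
    sA G σ i j * sA G σ i j = 1 := by
  simp only [sA, Matrix.of_apply, dif_pos h]
  cases σ ⟨s(i, j), by simpa using h⟩ <;> norm_num


def Good (π : Equiv.Perm (Fin n)) : Prop :=
  ∀ i, π i ≠ i → G.Adj (π i) i ∧ π (π i) = i

/-- The set of edges of the 2-cycles of a permutation. -/
def movedEdges (π : Equiv.Perm (Fin n)) : Finset (Sym2 (Fin n)) :=
  (Finset.univ.filter fun a => π a ≠ a).image fun a => s(a, π a)

lemma movedEdges_not_diag (π : Equiv.Perm (Fin n)) :
    ∀ e ∈ movedEdges π, ¬ e.IsDiag := by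
  intro e he
  simp only [movedEdges, Finset.mem_image, Finset.mem_filter, Finset.mem_univ, true_and] at he
  obtain ⟨a, ha, rfl⟩ := he
  simpa [Sym2.mk_isDiag_iff] using fun h => ha h.symm

lemma movedEdges_subset {π : Equiv.Perm (Fin n)} (hg : Good G π) :
    movedEdges π ⊆ G.edgeFinset := by
  intro e he
  simp only [movedEdges, Finset.mem_image, Finset.mem_filter, Finset.mem_univ, true_and] at he
  obtain ⟨a, ha, rfl⟩ := he
  simpa using ((hg a ha).1).symm

lemma movedEdges_key {π : Equiv.Perm (Fin n)} (hg : Good G π) {v : Fin n} {e : Sym2 (Fin n)}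
    (he : e ∈ movedEdges π) (hv : v ∈ e) : e = s(v, π v) := by
  simp only [movedEdges, Finset.mem_image, Finset.mem_filter, Finset.mem_univ, true_and] at he
  obtain ⟨a, ha, rfl⟩ := he
  rcases Sym2.mem_iff.mp hv with rfl | rfl
  · rfl
  · rw [(hg a ha).2]
    exact Sym2.eq_swap

lemma movedEdges_disj {π : Equiv.Perm (Fin n)} (hg : Good G π) : Disj (movedEdges π) := by
  rintro e he f hf hef v ⟨hve, hvf⟩
  exact hef ((movedEdges_key G hg he hve).trans (movedEdges_key G hg hf hvf).symm)

lemma mem_movedEdges {π : Equiv.Perm (Fin n)} {a : Fin n} (ha : π a ≠ a) :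
    s(a, π a) ∈ movedEdges π := by
  simp only [movedEdges, Finset.mem_image, Finset.mem_filter, Finset.mem_univ, true_and]
  exact ⟨a, ha, rfl⟩

lemma permOf_movedEdges {π : Equiv.Perm (Fin n)} (hg : Good G π) :
    permOf (movedEdges π) = π := by
  rw [permOf_eq (movedEdges_disj G hg)]
  apply Equiv.ext
  intro a
  by_cases ha : π a = a
  · rw [permM_apply_not_mem _ ?_, ha]
    intro e he hae
    have h1 := movedEdges_key G hg he hae
    rw [ha] at h1
    exact movedEdges_not_diag π e he (h1 ▸ Sym2.mk_isDiag_iff.mpr rfl)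
  · exact permM_apply_mem _ (mem_movedEdges ha)

lemma good_permOf {M : Finset (Sym2 (Fin n))} (hsub : M ⊆ G.edgeFinset) (hd : Disj M) :
    Good G (permOf M) := by
  rw [permOf_eq hd]
  have hnd : ∀ e ∈ M, ¬ e.IsDiag := fun e he =>
    G.not_isDiag_of_mem_edgeSet (by simpa using hsub he)
  intro a ha
  obtain ⟨e, he, hae⟩ := (permM_ne_iff hd hnd a).mp ha
  have hsp := Sym2.other_spec hae
  have hmem : s(a, Sym2.Mem.other hae) ∈ M := by rw [hsp]; exact he
  have h1 : permM M hd a = Sym2.Mem.other hae := permM_apply_mem hd hmem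
  constructor
  · rw [h1]
    have hes : s(a, Sym2.Mem.other hae) ∈ G.edgeSet := by simpa using hsub hmem
    exact (G.mem_edgeSet.mp hes).symm
  · rw [h1]
    exact permM_apply_mem hd (by rwa [Sym2.eq_swap])

lemma movedEdges_permOf {M : Finset (Sym2 (Fin n))} (hsub : M ⊆ G.edgeFinset) (hd : Disj M) :
    movedEdges (permOf M) = M := by
  rw [permOf_eq hd]
  have hnd : ∀ e ∈ M, ¬ e.IsDiag := fun e he =>
    G.not_isDiag_of_mem_edgeSet (by simpa using hsub he)
  ext e
  simp only [movedEdges, Finset.mem_image, Finset.mem_filter, Finset.mem_univ, true_and]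
  constructor
  · rintro ⟨a, ha, rfl⟩
    obtain ⟨f, hf, haf⟩ := (permM_ne_iff hd hnd a).mp ha
    have hsp := Sym2.other_spec haf
    have hmem : s(a, Sym2.Mem.other haf) ∈ M := by rw [hsp]; exact hf
    rw [permM_apply_mem hd hmem]
    exact hmem
  · intro he
    revert he
    induction e using Sym2.ind with
    | _ x y =>
      intro he
      have hxy : x ≠ y := by simpa [Sym2.mk_isDiag_iff] using hnd _ he
      have h1 : permM M hd x = y := permM_apply_mem hd he
      exact ⟨x, by rw [h1]; exact hxy.symm, by rw [h1]⟩

lemma vanish (π : Equiv.Perm (Fin n)) (hπ : ¬ Good G π) :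
    ∑ σ : G.edgeFinset → Bool, ∏ i, (sA G σ).charmatrix (π i) i = 0 := by
  classical
  by_cases h1 : ∃ j, π j ≠ j ∧ ¬ G.Adj (π j) j
  · obtain ⟨j, hj, hadj⟩ := h1
    apply Finset.sum_eq_zero
    intro σ _
    apply Finset.prod_eq_zero (Finset.mem_univ j)
    rw [Matrix.charmatrix_apply_ne _ _ _ hj]
    have h0 : sA G σ (π j) j = 0 := by simp [sA, hadj]
    rw [h0, map_zero, neg_zero]
  · push_neg at h1
    unfold Good at hπ
    push_neg at hπ
    obtain ⟨i0, hmv, hrest⟩ := hπ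
    have hadj0 : G.Adj (π i0) i0 := h1 i0 hmv
    have hnin : π (π i0) ≠ i0 := hrest hadj0
    set e0 : G.edgeFinset := ⟨s(π i0, i0), by simpa using hadj0⟩ with he0
    set F : (G.edgeFinset → Bool) → (G.edgeFinset → Bool) :=
      fun σ => Function.update σ e0 (!σ e0) with hF
    have hflipinv : Function.Involutive F := by
      intro σ
      funext x
      rcases eq_or_ne x e0 with rfl | hx
      · simp [hF, Function.update_self]
      · simp [hF, Function.update_of_ne hx]
    have hneg : ∀ σ, ∏ i, (sA G (F σ)).charmatrix (π i) i
        = - ∏ i, (sA G σ).charmatrix (π i) i := by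
      intro σ
      rw [← Finset.mul_prod_erase _ _ (Finset.mem_univ i0),
          ← Finset.mul_prod_erase _ (fun i => (sA G σ).charmatrix (π i) i) (Finset.mem_univ i0)]
      have hrest' : ∏ i ∈ Finset.univ.erase i0, (sA G (F σ)).charmatrix (π i) i
          = ∏ i ∈ Finset.univ.erase i0, (sA G σ).charmatrix (π i) i := by
        apply Finset.prod_congr rfl
        intro i hi
        have hne : i ≠ i0 := Finset.ne_of_mem_erase hi
        by_cases hfix : π i = i
        · rw [hfix, Matrix.charmatrix_apply_eq, Matrix.charmatrix_apply_eq, sA_diag, sA_diag]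
        · rw [Matrix.charmatrix_apply_ne _ _ _ hfix, Matrix.charmatrix_apply_ne _ _ _ hfix]
          have hA : sA G (F σ) (π i) i = sA G σ (π i) i := by
            by_cases hadj : G.Adj (π i) i
            · have hnee : (⟨s(π i, i), by simpa using hadj⟩ : G.edgeFinset) ≠ e0 := by
                intro hc
                have hc' : s(π i, i) = s(π i0, i0) := congrArg Subtype.val hc
                rcases Sym2.eq_iff.mp hc' with ⟨-, h2⟩ | ⟨h2, h3⟩
                · exact hne h2
                · exact hnin (by rw [← h3, h2])
              have hval : F σ ⟨s(π i, i), by simpa using hadj⟩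
                  = σ ⟨s(π i, i), by simpa using hadj⟩ := by
                rw [hF]
                exact Function.update_of_ne hnee _ _
              simp only [sA, Matrix.of_apply, dif_pos hadj, hval]
            · simp [sA, hadj]
          rw [hA]
      rw [hrest']
      have hA0 : (sA G (F σ)).charmatrix (π i0) i0 = - (sA G σ).charmatrix (π i0) i0 := by
        rw [Matrix.charmatrix_apply_ne _ _ _ hmv, Matrix.charmatrix_apply_ne _ _ _ hmv]
        have hAe : sA G (F σ) (π i0) i0 = - sA G σ (π i0) i0 := by
          simp only [sA, Matrix.of_apply, dif_pos hadj0]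
          have hFe : F σ e0 = !σ e0 := by simp [hF, Function.update_self]
          have hcoe : (⟨s(π i0, i0), by simpa using hadj0⟩ : G.edgeFinset) = e0 := rfl
          rw [hcoe, hFe]
          cases σ e0 <;> norm_num
        rw [hAe, map_neg, neg_neg]
      rw [hA0]
      ring
    have hS : ∑ σ : G.edgeFinset → Bool, ∏ i, (sA G σ).charmatrix (π i) i
        = - ∑ σ : G.edgeFinset → Bool, ∏ i, (sA G σ).charmatrix (π i) i := by
      conv_lhs => rw [← Fintype.sum_bijective F hflipinv.bijective
        (fun σ => ∏ i, (sA G (F σ)).charmatrix (π i) i)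
        (fun σ => ∏ i, (sA G σ).charmatrix (π i) i) (fun σ => rfl)]
      simp only [hneg]
      rw [Finset.sum_neg_distrib]
    have h2 : (2 : Polynomial ℝ) * ∑ σ : G.edgeFinset → Bool,
        ∏ i, (sA G σ).charmatrix (π i) i = 0 := by linear_combination hS
    rcases mul_eq_zero.mp h2 with h | h
    · exact absurd h two_ne_zero
    · exact h

lemma value {M : Finset (Sym2 (Fin n))} (hsub : M ⊆ G.edgeFinset) (hd : Disj M) :
    ∑ σ : G.edgeFinset → Bool,
      Equiv.Perm.sign (permOf M) • ∏ i, (sA G σ).charmatrix (permOf M i) i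
    = (2 : ℝ) ^ G.edgeFinset.card •
        ((-1 : Polynomial ℝ) ^ M.card * Polynomial.X ^ (n - 2 * M.card)) := by
  classical
  have hnd : ∀ e ∈ M, ¬ e.IsDiag := fun e he =>
    G.not_isDiag_of_mem_edgeSet (by simpa using hsub he)
  have hgood : Good G (permM M hd) := by
    have := good_permOf G hsub hd
    rwa [permOf_eq hd] at this
  rw [permOf_eq hd]
  set π := permM M hd with hπ
  have hprod : ∀ σ : G.edgeFinset → Bool,
      ∏ i, (sA G σ).charmatrix (π i) i = Polynomial.X ^ (n - 2 * M.card) := by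
    intro σ
    rw [← Finset.prod_filter_mul_prod_filter_not Finset.univ (fun i => π i ≠ i)]
    have h1 : ∏ i ∈ Finset.univ.filter (fun i => π i ≠ i),
        (sA G σ).charmatrix (π i) i = 1 := by
      refine Finset.prod_involution (fun a _ => π a) ?_ ?_ ?_ ?_
      · intro a ha
        have hmv : π a ≠ a := (Finset.mem_filter.mp ha).2
        have hiv : π (π a) = a := (hgood a hmv).2
        have hadj : G.Adj (π a) a := (hgood a hmv).1
        have hstep : (sA G σ).charmatrix (π (π a)) (π a) = - Polynomial.C (sA G σ a (π a)) := by
          rw [hiv, Matrix.charmatrix_apply_ne _ _ _ (Ne.symm hmv)]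
        rw [Matrix.charmatrix_apply_ne _ _ _ hmv, hstep, neg_mul_neg, ← map_mul,
          sA_symm G σ a (π a), sA_sq G σ hadj, map_one]
      · intro a ha _
        exact (Finset.mem_filter.mp ha).2
      · intro a ha
        have hmv : π a ≠ a := (Finset.mem_filter.mp ha).2
        simp only [Finset.mem_filter, Finset.mem_univ, true_and]
        rw [(hgood a hmv).2]
        exact Ne.symm hmv
      · intro a ha
        exact (hgood a (Finset.mem_filter.mp ha).2).2
    have h2 : ∏ i ∈ Finset.univ.filter (fun i => ¬ π i ≠ i),
        (sA G σ).charmatrix (π i) i = Polynomial.X ^ (n - 2 * M.card) := by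
      have hcongr : ∀ i ∈ Finset.univ.filter (fun i => ¬ π i ≠ i),
          (sA G σ).charmatrix (π i) i = Polynomial.X := by
        intro i hi
        have hfix : π i = i := not_not.mp (Finset.mem_filter.mp hi).2
        rw [hfix, Matrix.charmatrix_apply_eq, sA_diag, map_zero, sub_zero]
      rw [Finset.prod_congr rfl hcongr, Finset.prod_const]
      congr 1
      have hm : (Finset.univ.filter fun a => π a ≠ a).card = 2 * M.card :=
        card_moved hd hnd
      have htot := Finset.card_filter_add_card_filter_not
        (s := (Finset.univ : Finset (Fin n))) (p := fun i => π i ≠ i)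
      have huniv : (Finset.univ : Finset (Fin n)).card = n := by simp
      omega
    rw [h1, h2, one_mul]
  have hsign : Equiv.Perm.sign π = (-1 : ℤˣ) ^ M.card := sign_permM hd hnd
  calc ∑ σ : G.edgeFinset → Bool, Equiv.Perm.sign π • ∏ i, (sA G σ).charmatrix (π i) i
      = ∑ _σ : G.edgeFinset → Bool,
          ((-1 : ℤˣ) ^ M.card • (Polynomial.X : Polynomial ℝ) ^ (n - 2 * M.card)) := by
        apply Finset.sum_congr rfl
        intro σ _
        rw [hprod σ, hsign]
    _ = (2 ^ G.edgeFinset.card : ℕ) •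
          ((-1 : ℤˣ) ^ M.card • (Polynomial.X : Polynomial ℝ) ^ (n - 2 * M.card)) := by
        rw [Finset.sum_const, Finset.card_univ]
        congr 1
        simp only [Fintype.card_fun, Fintype.card_bool, Fintype.card_coe]
    _ = (2 : ℝ) ^ G.edgeFinset.card •
          ((-1 : Polynomial ℝ) ^ M.card * Polynomial.X ^ (n - 2 * M.card)) := by
        have hu : ((-1 : ℤˣ) ^ M.card • (Polynomial.X : Polynomial ℝ) ^ (n - 2 * M.card))
            = (-1 : Polynomial ℝ) ^ M.card * Polynomial.X ^ (n - 2 * M.card) := by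
          rcases Nat.even_or_odd M.card with hev | hod
          · rw [hev.neg_one_pow, hev.neg_one_pow, one_smul, one_mul]
          · rw [hod.neg_one_pow, hod.neg_one_pow, neg_one_mul]
            simp
        rw [hu, ← Nat.cast_smul_eq_nsmul ℝ]
        norm_num

end Graph

open scoped Classical in
/-- Godsil–Gutman: For a graph G on n vertices, the average over all 2^|E(G)|
signatures σ of the characteristic polynomials of the signed adjacency matrices A_σ equals
the matching polynomial μ_G(x) = ∑_k (-1)^k m_k x^{n-2k}, where m_k is the number of
k-edge matchings (here the sum over matchings M contributes (-1)^{|M|} x^{n-2|M|}). -/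
theorem stmt_10 {n : ℕ} (G : SimpleGraph (Fin n)) [DecidableRel G.Adj] :
    ((2 : ℝ) ^ G.edgeFinset.card)⁻¹ •
      ∑ σ : G.edgeFinset → Bool,
        (Matrix.charpoly (Matrix.of (fun i j : Fin n =>
          if h : G.Adj i j then (if σ ⟨s(i, j), by simpa using h⟩ then (1 : ℝ) else -1) else 0)))
      = ∑ M ∈ G.edgeFinset.powerset.filter
            (fun M => ∀ e ∈ M, ∀ f ∈ M, e ≠ f → ∀ v : Fin n, ¬(v ∈ e ∧ v ∈ f)),
          (-1 : Polynomial ℝ) ^ M.card * Polynomial.X ^ (n - 2 * M.card) := by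
  classical
  show ((2 : ℝ) ^ G.edgeFinset.card)⁻¹ • ∑ σ : G.edgeFinset → Bool, (sA G σ).charpoly = _
  -- main claim: the unnormalized sum is 2^m times the matching polynomial
  have main : ∑ σ : G.edgeFinset → Bool, (sA G σ).charpoly
      = (2 : ℝ) ^ G.edgeFinset.card •
        ∑ M ∈ G.edgeFinset.powerset.filter
            (fun M => ∀ e ∈ M, ∀ f ∈ M, e ≠ f → ∀ v : Fin n, ¬(v ∈ e ∧ v ∈ f)),
          (-1 : Polynomial ℝ) ^ M.card * Polynomial.X ^ (n - 2 * M.card) := by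
    have hchar : ∀ σ : G.edgeFinset → Bool, (sA G σ).charpoly
        = ∑ π : Equiv.Perm (Fin n),
            Equiv.Perm.sign π • ∏ i, (sA G σ).charmatrix (π i) i := by
      intro σ
      rw [Matrix.charpoly, Matrix.det_apply]
    calc ∑ σ : G.edgeFinset → Bool, (sA G σ).charpoly
        = ∑ π : Equiv.Perm (Fin n), ∑ σ : G.edgeFinset → Bool,
            Equiv.Perm.sign π • ∏ i, (sA G σ).charmatrix (π i) i := by
          simp only [hchar]
          exact Finset.sum_comm
      _ = ∑ π ∈ Finset.univ.filter (Good G), ∑ σ : G.edgeFinset → Bool,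
            Equiv.Perm.sign π • ∏ i, (sA G σ).charmatrix (π i) i := by
          refine (Finset.sum_filter_of_ne ?_).symm
          intro π _ hne
          by_contra hng
          apply hne
          rw [← Finset.smul_sum, vanish G π hng, smul_zero]
      _ = ∑ M ∈ G.edgeFinset.powerset.filter
            (fun M => ∀ e ∈ M, ∀ f ∈ M, e ≠ f → ∀ v : Fin n, ¬(v ∈ e ∧ v ∈ f)),
            (2 : ℝ) ^ G.edgeFinset.card •
              ((-1 : Polynomial ℝ) ^ M.card * Polynomial.X ^ (n - 2 * M.card)) := by
          refine Finset.sum_nbij' (fun π => movedEdges π) (fun M => permOf M)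
            ?_ ?_ ?_ ?_ ?_
          · intro π hπ
            have hg : Good G π := (Finset.mem_filter.mp hπ).2
            rw [Finset.mem_filter, Finset.mem_powerset]
            exact ⟨movedEdges_subset G hg, movedEdges_disj G hg⟩
          · intro M hM
            rw [Finset.mem_filter, Finset.mem_powerset] at hM
            rw [Finset.mem_filter]
            exact ⟨Finset.mem_univ _, good_permOf G hM.1 hM.2⟩
          · intro π hπ
            exact permOf_movedEdges G (Finset.mem_filter.mp hπ).2
          · intro M hM
            rw [Finset.mem_filter, Finset.mem_powerset] at hM
            exact movedEdges_permOf G hM.1 hM.2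
          · intro π hπ
            have hg : Good G π := (Finset.mem_filter.mp hπ).2
            have hv := value G (movedEdges_subset G hg) (movedEdges_disj G hg)
            rw [permOf_movedEdges G hg] at hv
            exact hv
      _ = (2 : ℝ) ^ G.edgeFinset.card •
            ∑ M ∈ G.edgeFinset.powerset.filter
              (fun M => ∀ e ∈ M, ∀ f ∈ M, e ≠ f → ∀ v : Fin n, ¬(v ∈ e ∧ v ∈ f)),
              (-1 : Polynomial ℝ) ^ M.card * Polynomial.X ^ (n - 2 * M.card) :=
          (Finset.smul_sum).symm
  rw [main, smul_smul, inv_mul_cancel₀ (by positivity), one_smul]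
end

section
/- If Γ is a graph on n vertices with Seidel matrix S, then the Seidel energy S(Γ) (the sum of the absolute values of the eigenvalues of S) satisfies S(Γ) ≤ n√(n-1), with equality if and only if S is a conference matrix, i.e., S² = (n-1)I. -/
lemma cs_ident {n : ℕ} (a : Fin n → ℝ) :
    ∑ i, ∑ j, (a i - a j)^2 = 2*((n:ℝ) * ∑ i, (a i)^2 - (∑ i, a i)^2) := by
  have h1 : ∀ i j : Fin n, (a i - a j)^2 = (a i)^2 - 2*(a i * a j) + (a j)^2 := by intros; ring
  simp only [h1, Finset.sum_add_distrib, Finset.sum_sub_distrib, ← Finset.mul_sum,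
    ← Finset.sum_mul, Finset.sum_const, Finset.card_univ, Fintype.card_fin, nsmul_eq_mul]
  ring

lemma cs_le {n : ℕ} (a : Fin n → ℝ) : (∑ i, a i)^2 ≤ (n:ℝ) * ∑ i, (a i)^2 := by
  nlinarith [cs_ident a, Finset.sum_nonneg (fun i (_ : i ∈ Finset.univ) =>
    Finset.sum_nonneg (fun j (_ : j ∈ Finset.univ) => sq_nonneg (a i - a j)))]

lemma cs_eq {n : ℕ} (a : Fin n → ℝ) (h : (∑ i, a i)^2 = (n:ℝ) * ∑ i, (a i)^2) :
    ∀ i j, a i = a j := by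
  have h0 : ∑ i, ∑ j, (a i - a j)^2 = 0 := by rw [cs_ident]; rw [h]; ring
  intro i j
  have := (Finset.sum_eq_zero_iff_of_nonneg (fun i _ => Finset.sum_nonneg
    (fun j _ => sq_nonneg (a i - a j)))).mp h0 i (Finset.mem_univ i)
  have := (Finset.sum_eq_zero_iff_of_nonneg (fun j _ => sq_nonneg (a i - a j))).mp this j
    (Finset.mem_univ j)
  have := sq_eq_zero_iff.mp this
  linarith

lemma spec_aux {n : ℕ} (S : Matrix (Fin n) (Fin n) ℝ) (hH : S.IsHermitian) :
    (∑ i, hH.eigenvalues i ^ 2 = (S * S).trace) ∧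
    (∀ c : ℝ, (S * S = c • (1 : Matrix (Fin n) (Fin n) ℝ) ↔ ∀ i, hH.eigenvalues i ^ 2 = c)) := by
  set U : Matrix (Fin n) (Fin n) ℝ := (hH.eigenvectorUnitary : Matrix (Fin n) (Fin n) ℝ) with hU
  have hUU : U * star U = 1 := (Matrix.mem_unitaryGroup_iff).mp hH.eigenvectorUnitary.2
  have hUU' : star U * U = 1 := (Matrix.mem_unitaryGroup_iff').mp hH.eigenvectorUnitary.2
  have key : star U * S * U = Matrix.diagonal hH.eigenvalues := by
    have := hH.conjStarAlgAut_star_eigenvectorUnitary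
    simpa [RCLike.ofReal_real_eq_id, Unitary.conjStarAlgAut_apply] using this
  have Dsq : star U * (S * S) * U = Matrix.diagonal (fun i => hH.eigenvalues i ^ 2) := by
    have h0 : star U * (S * S) * U = (star U * S * U) * (star U * S * U) := by
      have h1 : (star U * S * U) * (star U * S * U) = star U * S * (U * star U) * S * U := by
        noncomm_ring
      rw [h1, hUU]; noncomm_ring
    rw [h0, key, Matrix.diagonal_mul_diagonal]
    funext i; ring
  constructor
  · have := congrArg Matrix.trace Dsq
    rw [Matrix.trace_mul_cycle, ← Matrix.mul_assoc, hUU, Matrix.one_mul] at this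
    rw [this, Matrix.trace_diagonal]
  · intro c
    constructor
    · intro h
      rw [h] at Dsq
      have h2 : star U * (c • (1 : Matrix (Fin n) (Fin n) ℝ)) * U = c • (1 : Matrix (Fin n) (Fin n) ℝ) := by
        rw [Matrix.mul_smul, Matrix.smul_mul, Matrix.mul_one, hUU']
      rw [h2] at Dsq
      intro i
      have := congrFun (congrFun Dsq.symm i) i
      simpa using this
    · intro h
      have hD : Matrix.diagonal (fun i => hH.eigenvalues i ^ 2)
          = c • (1 : Matrix (Fin n) (Fin n) ℝ) := by
        ext i j
        by_cases hij : i = j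
        · subst hij; simp [h i]
        · simp [Matrix.diagonal_apply_ne _ hij, Matrix.one_apply_ne hij]
      have hrec : S * S = U * (star U * (S * S) * U) * star U := by
        have : U * (star U * (S * S) * U) * star U = (U * star U) * (S * S) * (U * star U) := by
          noncomm_ring
        rw [this, hUU, Matrix.one_mul, Matrix.mul_one]
      rw [hrec, Dsq, hD, Matrix.mul_smul, Matrix.smul_mul, Matrix.mul_one, hUU]

/-- Haemers: The Seidel energy of a graph Γ on n vertices (the sum of the
absolute values of the eigenvalues of its Seidel matrix S) is at most n√(n-1), with
equality if and only if S is a conference matrix, i.e. S² = (n-1)·I. -/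
theorem stmt_12 {n : ℕ} (G : SimpleGraph (Fin n)) [DecidableRel G.Adj]
    (S : Matrix (Fin n) (Fin n) ℝ)
    (hS : ∀ i j, S i j = if i = j then 0 else if G.Adj i j then -1 else 1)
    (hH : S.IsHermitian)
    (energy : ℝ) (henergy : energy = ∑ i, |hH.eigenvalues i|) :
    energy ≤ n * Real.sqrt (n - 1) ∧
      (energy = n * Real.sqrt (n - 1) ↔
        S * S = ((n : ℝ) - 1) • (1 : Matrix (Fin n) (Fin n) ℝ)) := by
  obtain ⟨htr, hiff⟩ := spec_aux S hH
  rcases Nat.eq_zero_or_pos n with hn | hn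
  · subst hn
    have he : energy = 0 := by simp [henergy]
    refine ⟨by simp [he], ?_⟩
    constructor
    · intro _; exact Subsingleton.elim _ _
    · intro _; simp [he]
  -- n ≥ 1
  have hn1 : (0:ℝ) ≤ (n:ℝ) - 1 := by
    have : (1:ℝ) ≤ (n:ℝ) := by exact_mod_cast hn
    linarith
  have hnpos : (0:ℝ) < (n:ℝ) := by exact_mod_cast hn
  set θ := hH.eigenvalues with hθ
  -- trace computation
  have hprod : ∀ i j, S i j * S j i = if i = j then (0:ℝ) else 1 := by
    intro i j
    rw [hS, hS]
    by_cases h : i = j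
    · simp [h]
    · by_cases hadj : G.Adj i j
      · rw [if_neg h, if_pos hadj, if_neg (Ne.symm h), if_pos hadj.symm, if_neg h]; ring
      · rw [if_neg h, if_neg hadj, if_neg (Ne.symm h),
          if_neg (fun hc => hadj hc.symm), if_neg h]; ring
  have htrace : (S * S).trace = (n:ℝ) * ((n:ℝ) - 1) := by
    rw [Matrix.trace]
    have hrow : ∀ i : Fin n, (S * S) i i = (n:ℝ) - 1 := by
      intro i
      rw [Matrix.mul_apply]
      simp only [hprod]
      have h1 : ∀ j : Fin n, (if i = j then (0:ℝ) else 1) = 1 - (if i = j then 1 else 0) := by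
        intro j; split <;> ring
      simp [h1, Finset.sum_sub_distrib, Finset.sum_ite_eq]
    simp [Matrix.diag, hrow, Finset.sum_const, Finset.card_univ, mul_comm]; ring
  have hsumsq : ∑ i, θ i ^ 2 = (n:ℝ) * ((n:ℝ) - 1) := by rw [htr, htrace]
  set a : Fin n → ℝ := fun i => |θ i| with ha
  have hasumsq : ∑ i, a i ^ 2 = (n:ℝ) * ((n:ℝ) - 1) := by
    simpa [ha, sq_abs] using hsumsq
  have hanonneg : 0 ≤ energy := by
    rw [henergy]; exact Finset.sum_nonneg fun i _ => abs_nonneg _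
  have hCS : energy ^ 2 ≤ (n:ℝ)^2 * ((n:ℝ) - 1) := by
    have := cs_le a
    rw [hasumsq] at this
    rw [henergy]
    calc (∑ i, |θ i|)^2 ≤ (n:ℝ) * ((n:ℝ) * ((n:ℝ)-1)) := this
      _ = (n:ℝ)^2 * ((n:ℝ)-1) := by ring
  have hsq : ((n:ℝ) * Real.sqrt ((n:ℝ)-1))^2 = (n:ℝ)^2 * ((n:ℝ)-1) := by
    rw [mul_pow, Real.sq_sqrt hn1]
  have hrhs_nonneg : 0 ≤ (n:ℝ) * Real.sqrt ((n:ℝ)-1) := by positivity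
  have hle : energy ≤ (n:ℝ) * Real.sqrt ((n:ℝ)-1) := by
    have h2 : energy ^ 2 ≤ ((n:ℝ) * Real.sqrt ((n:ℝ)-1))^2 := by rw [hsq]; exact hCS
    nlinarith
  refine ⟨hle, ?_, ?_⟩
  · -- equality → conference
    intro h
    have heq2 : energy ^ 2 = (n:ℝ)^2 * ((n:ℝ) - 1) := by rw [h, hsq]
    have heqCS : (∑ i, a i)^2 = (n:ℝ) * ∑ i, a i ^ 2 := by
      rw [hasumsq, ← henergy, heq2]; ring
    have hall := cs_eq a heqCS
    rw [hiff]
    intro i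
    have hsum_i : ∑ j, a j ^ 2 = (n:ℝ) * a i ^ 2 := by
      rw [Finset.sum_congr rfl (fun j _ => by rw [hall j i])]
      simp [Finset.sum_const, Finset.card_univ, mul_comm]
    have : (n:ℝ) * a i ^ 2 = (n:ℝ) * ((n:ℝ) - 1) := by rw [← hsum_i, hasumsq]
    have hai : a i ^ 2 = (n:ℝ) - 1 := mul_left_cancel₀ (ne_of_gt hnpos) this
    rw [← sq_abs]; exact hai
  · -- conference → equality
    intro h
    have hall := (hiff ((n:ℝ) - 1)).mp h
    have habs : ∀ i, |θ i| = Real.sqrt ((n:ℝ) - 1) := by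
      intro i
      rw [← Real.sqrt_sq_eq_abs, hall i]
    rw [henergy]
    rw [Finset.sum_congr rfl (fun i _ => habs i)]
    simp [Finset.sum_const, Finset.card_univ, mul_comm]
end

section
/- For every integer k ≥ 3, the signed toroidal tessellation T_{2k} on 2k vertices has characteristic polynomial (x-2)^k (x+2)^k; in particular T_{2k} is a 4-regular signed graph with exactly two distinct adjacency eigenvalues 2 and -2, each of multiplicity k, equivalently A(T_{2k})² = 4I. -/
/-- The signed adjacency matrix of the toroidal tessellation T_{2k}: the vertices are
(i,a) with i ∈ ℤ_k, a ∈ ℤ_2, each vertex (i,a) being adjacent to the two vertices on each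
of the adjacent rings i+1 and i-1 (a 4-regular quadrangulation of the torus), with signs
given by the block pattern B = [[1,1],[-1,-1]]. -/
def toroidalT (k : ℕ) [NeZero k] : Matrix (ZMod k × Fin 2) (ZMod k × Fin 2) ℝ :=
  Matrix.of fun p q =>
    if q.1 = p.1 + 1 then (if p.2 = 0 then 1 else -1)
    else if q.1 = p.1 - 1 then (if q.2 = 0 then 1 else -1)
    else 0

open Polynomial Matrix Finset

section Aux

variable (k : ℕ) [NeZero k]

omit [NeZero k] in
lemma torT_two_ne (hk : 3 ≤ k) : (2 : ZMod k) ≠ 0 := by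
  intro h
  have h2 : ((2:ℕ) : ZMod k) = 0 := by exact_mod_cast h
  have := Nat.le_of_dvd (by norm_num) ((ZMod.natCast_eq_zero_iff 2 k).mp h2)
  omega

omit [NeZero k] in
lemma torT_add_ne_sub (hk : 3 ≤ k) (i : ZMod k) : i + 1 ≠ i - 1 := fun h =>
  torT_two_ne k hk (by linear_combination h)

lemma torT_symm (hk : 3 ≤ k) : (toroidalT k).IsSymm := by
  ext ⟨j, b⟩ ⟨i, a⟩
  simp only [toroidalT, Matrix.transpose_apply, Matrix.of_apply]
  by_cases h1 : j = i + 1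
  · have h2 : ¬ (i = j + 1) := by
      intro h; subst h1; exact torT_add_ne_sub k hk i (by linear_combination -h)
    have h3 : i = j - 1 := by subst h1; ring
    rw [if_pos h1, if_neg h2, if_pos h3]
  · by_cases h2 : j = i - 1
    · have h3 : i = j + 1 := by subst h2; ring
      rw [if_neg h1, if_pos h2, if_pos h3]
    · have h3 : ¬ (i = j + 1) := by
        intro h; apply h2; subst h; ring
      have h4 : ¬ (i = j - 1) := by
        intro h; apply h1; subst h; ring
      rw [if_neg h1, if_neg h2, if_neg h3, if_neg h4]

lemma torT_deg (hk : 3 ≤ k) (p : ZMod k × Fin 2) :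
    (Finset.univ.filter (fun q => toroidalT k p q ≠ 0)).card = 4 := by
  have : (Finset.univ.filter (fun q => toroidalT k p q ≠ 0)) =
      ({p.1 + 1, p.1 - 1} : Finset (ZMod k)) ×ˢ (Finset.univ : Finset (Fin 2)) := by
    ext ⟨j, b⟩
    rw [Finset.mem_filter]
    simp only [Finset.mem_filter, Finset.mem_univ, true_and, Finset.mem_product,
      Finset.mem_insert, Finset.mem_singleton, and_true, toroidalT, Matrix.of_apply]
    constructor
    · intro h
      by_contra hc
      push_neg at hc
      simp [hc.1, hc.2] at h
    · rintro (h | h)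
      · simp only [h, if_true]
        split <;> norm_num
      · rw [if_neg (fun hh => torT_add_ne_sub k hk p.1 (hh.symm.trans h)), if_pos h]
        split <;> norm_num
  rw [this, Finset.card_product]
  rw [Finset.card_insert_of_notMem (by simp [torT_add_ne_sub k hk p.1])]
  simp

lemma torT_sq (hk : 3 ≤ k) :
    toroidalT k * toroidalT k = (4 : ℝ) • (1 : Matrix (ZMod k × Fin 2) (ZMod k × Fin 2) ℝ) := by
  have h2 := torT_two_ne k hk
  ext ⟨i, a⟩ ⟨l, c⟩
  rw [Matrix.mul_apply, Fintype.sum_prod_type]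
  have hzero : ∀ j ∈ (Finset.univ : Finset (ZMod k)), j ∉ ({i+1, i-1} : Finset (ZMod k)) →
      (∑ b : Fin 2, toroidalT k (i,a) (j,b) * toroidalT k (j,b) (l,c)) = 0 := by
    intro j _ hj
    simp only [Finset.mem_insert, Finset.mem_singleton, not_or] at hj
    simp [toroidalT, hj.1, hj.2]
  rw [← Finset.sum_subset (Finset.subset_univ _) hzero,
    Finset.sum_insert (by
      simp only [Finset.mem_singleton]
      intro h; exact h2 (by linear_combination h)),
    Finset.sum_singleton]
  simp only [toroidalT, Matrix.of_apply, Fin.sum_univ_two]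
  have e1 : i + 1 - 1 = i := by ring
  have e2 : i - 1 + 1 = i := by ring
  have e3 : ¬ (i - 1 = i + 1) := by intro h; exact h2 (by linear_combination -h)
  rw [e1, e2]
  simp only [if_pos rfl, if_neg e3]
  simp only [Matrix.smul_apply, Matrix.one_apply, Prod.mk.injEq, smul_eq_mul]
  have f10 : ¬ ((1 : Fin 2) = 0) := by decide
  by_cases hl : l = i
  · subst hl
    have hA : ¬ (l = l + 1 + 1) := by intro h; exact h2 (by linear_combination -h)
    have hB : ¬ (l = l - 1 - 1) := by intro h; exact h2 (by linear_combination h)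
    simp only [hA, hB, if_false, if_pos rfl, f10, true_and]
    fin_cases a <;> fin_cases c <;> simp [f10] <;> ring
  · have hl' : ¬ (i = l) := fun h => hl h.symm
    simp only [hl, hl', if_false, false_and, f10]
    split_ifs <;> ring

/-- A is similar to -A via swapping the second coordinate. -/
lemma torT_neg :
    Matrix.reindex (Equiv.prodCongr (Equiv.refl (ZMod k)) (Equiv.swap (0:Fin 2) 1))
        (Equiv.prodCongr (Equiv.refl (ZMod k)) (Equiv.swap (0:Fin 2) 1)) (toroidalT k)
      = -(toroidalT k) := by
  ext ⟨i, a⟩ ⟨j, b⟩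
  simp only [Matrix.reindex_apply, Matrix.submatrix_apply, Equiv.prodCongr_symm,
    Equiv.prodCongr_apply, Equiv.refl_symm, Equiv.coe_refl, Prod.map, id_eq,
    Equiv.symm_swap, toroidalT, Matrix.of_apply, Matrix.neg_apply]
  fin_cases a <;> fin_cases b <;> split_ifs <;> simp_all

lemma torT_char_neg : (-(toroidalT k)).charpoly = (toroidalT k).charpoly := by
  rw [← torT_neg, Matrix.charpoly_reindex]

lemma torT_key (hk : 3 ≤ k) :
    (toroidalT k).charpoly * (toroidalT k).charpoly
      = (((X:ℝ[X]) - C 2) ^ k * ((X:ℝ[X]) + C 2) ^ k) ^ 2 := by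
  set A := toroidalT k
  have hcm : charmatrix A * charmatrix (-A) = ((X:ℝ[X])^2 - C 4) • 1 := by
    have hmapneg : (C : ℝ →+* ℝ[X]).mapMatrix (-A) = -((C : ℝ →+* ℝ[X]).mapMatrix A) := by
      ext p q; simp [RingHom.mapMatrix_apply, Matrix.map_apply]
    rw [charmatrix, charmatrix, hmapneg, sub_neg_eq_add]
    set B := (C : ℝ →+* ℝ[X]).mapMatrix A
    have expand : (Matrix.scalar _ (X:ℝ[X]) - B) * (Matrix.scalar _ (X:ℝ[X]) + B)
        = Matrix.scalar _ (X:ℝ[X]) * Matrix.scalar _ (X:ℝ[X]) - B * B := by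
      rw [sub_mul, mul_add, mul_add]
      rw [(Matrix.scalar_commute (X:ℝ[X]) (fun r' => mul_comm _ _) B).eq]
      abel
    rw [expand]
    have hBB : B * B = (C : ℝ →+* ℝ[X]).mapMatrix (A * A) := by
      rw [show B = A.map (C : ℝ →+* ℝ[X]) from rfl, ← Matrix.map_mul]
      simp only [RingHom.mapMatrix_apply]
    rw [hBB, torT_sq k hk]
    ext p q
    by_cases h : p = q <;>
      simp [h, Matrix.smul_apply, Matrix.one_apply, Matrix.scalar_apply,
        Matrix.diagonal_apply, RingHom.mapMatrix_apply, Matrix.map_apply, sq]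
  have hdet : A.charpoly * (-A).charpoly = ((X:ℝ[X])^2 - C 4) ^ (2 * k) := by
    rw [Matrix.charpoly, Matrix.charpoly, ← Matrix.det_mul, hcm, Matrix.det_smul, Matrix.det_one,
      mul_one]
    congr 1
    simp [Fintype.card_prod, ZMod.card, mul_comm]
  rw [torT_char_neg] at hdet
  rw [hdet]
  have h4 : ((X:ℝ[X])^2 - C 4) = ((X:ℝ[X]) - C 2) * ((X:ℝ[X]) + C 2) := by
    have : (C (4:ℝ)) = C 2 * C 2 := by rw [← C_mul]; norm_num
    rw [this]; ring
  rw [h4, mul_pow]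
  ring

lemma torT_char (hk : 3 ≤ k) :
    (toroidalT k).charpoly = ((X:ℝ[X]) - C 2) ^ k * ((X:ℝ[X]) + C 2) ^ k := by
  set P := (toroidalT k).charpoly with hP
  set Q := ((X:ℝ[X]) - C 2) ^ k * ((X:ℝ[X]) + C 2) ^ k with hQ
  have hsq : P ^ 2 = Q ^ 2 := by rw [sq, torT_key k hk]
  have : (P - Q) * (P + Q) = 0 := by linear_combination hsq
  rcases mul_eq_zero.mp this with h | h
  · exact sub_eq_zero.mp h
  · exfalso
    have hPm : P.Monic := Matrix.charpoly_monic _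
    have hQm : Q.Monic := ((monic_X_sub_C (2:ℝ)).pow k).mul ((monic_X_add_C (2:ℝ)).pow k)
    have hPQ : P = -Q := eq_neg_of_add_eq_zero_left h
    have h1 : (1:ℝ) = -1 := by
      have := hPm.leadingCoeff
      rw [hPQ, leadingCoeff_neg, hQm.leadingCoeff] at this
      linarith
    norm_num at h1

end Aux

/-- For every k ≥ 3, the signed toroidal tessellation T_{2k} on 2k vertices is
4-regular, its characteristic polynomial is (x-2)^k (x+2)^k, so it has exactly the two
distinct eigenvalues 2 and -2, each of multiplicity k; equivalently A(T_{2k})² = 4·I. -/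
theorem stmt_13 (k : ℕ) [NeZero k] (hk : 3 ≤ k) :
    (toroidalT k).IsSymm ∧
    (∀ p, (Finset.univ.filter (fun q => toroidalT k p q ≠ 0)).card = 4) ∧
    toroidalT k * toroidalT k = (4 : ℝ) • (1 : Matrix (ZMod k × Fin 2) (ZMod k × Fin 2) ℝ) ∧
    (toroidalT k).charpoly =
      (Polynomial.X - Polynomial.C (2 : ℝ)) ^ k * (Polynomial.X + Polynomial.C (2 : ℝ)) ^ k := by
  exact ⟨torT_symm k hk, torT_deg k hk, torT_sq k hk, torT_char k hk⟩
end

section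
/- Let G be a k-regular graph on N vertices with a signed adjacency matrix A_s satisfying A_s² = k·I_N. Define B as the block matrix [[A_s, I_N],[I_N, -A_s]]. Then B is a signed adjacency matrix of a (k+1)-regular graph on 2N vertices (two copies of G joined by a perfect matching) and B² = (k+1)·I_{2N}; hence its spectral radius is √(k+1), attaining Gregory's lower bound. -/
open Matrix Finset

lemma card_filter_sum_aux {α β : Type*} [Fintype α] [Fintype β]
    (p : α ⊕ β → Prop) [DecidablePred p] :
    (Finset.univ.filter p).card =
      (Finset.univ.filter (fun a => p (Sum.inl a))).card +
      (Finset.univ.filter (fun b => p (Sum.inr b))).card := by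
  have h : (Finset.univ : Finset (α ⊕ β)).filter p =
      (Finset.univ.filter (fun a => p (Sum.inl a))).disjSum
        (Finset.univ.filter (fun b => p (Sum.inr b))) := by
    ext x
    cases x <;> simp
  rw [h, Finset.card_disjSum]

/-- Let G be a k-regular graph on N vertices with a signed adjacency matrix
A_s satisfying A_s² = k·I.  Then B = [[A_s, I],[I, -A_s]] is a signed adjacency matrix of a
(k+1)-regular graph on 2N vertices (two copies of G joined by a perfect matching),
B² = (k+1)·I, and hence the spectral radius of B is √(k+1), attaining Gregory's bound. -/
theorem stmt_14 {N k : ℕ} [NeZero N] (G : SimpleGraph (Fin N)) [DecidableRel G.Adj]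
    (hreg : G.IsRegularOfDegree k)
    (As : Matrix (Fin N) (Fin N) ℝ) (hsymm : As.IsSymm)
    (hadj : ∀ i j, G.Adj i j → (As i j = 1 ∨ As i j = -1))
    (hnadj : ∀ i j, ¬ G.Adj i j → As i j = 0)
    (hsq : As * As = (k : ℝ) • (1 : Matrix (Fin N) (Fin N) ℝ))
    (B : Matrix (Fin N ⊕ Fin N) (Fin N ⊕ Fin N) ℝ)
    (hB : B = Matrix.fromBlocks As 1 1 (-As))
    (hH : B.IsHermitian) :
    B.IsSymm ∧
    (∀ v w, B v w = 0 ∨ B v w = 1 ∨ B v w = -1) ∧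
    (∀ v, (Finset.univ.filter (fun w => B v w ≠ 0)).card = k + 1) ∧
    B * B = ((k : ℝ) + 1) • (1 : Matrix (Fin N ⊕ Fin N) (Fin N ⊕ Fin N) ℝ) ∧
    Finset.univ.sup' Finset.univ_nonempty (fun i => |hH.eigenvalues i|)
      = Real.sqrt (k + 1) := by
  have hAsne : ∀ i j, As i j ≠ 0 ↔ G.Adj i j := by
    intro i j
    constructor
    · intro h
      by_contra hn
      exact h (hnadj i j hn)
    · intro h
      rcases hadj i j h with h1 | h1 <;> rw [h1] <;> norm_num
  -- B² = (k+1) • 1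
  have hBsq : B * B = ((k : ℝ) + 1) • (1 : Matrix (Fin N ⊕ Fin N) (Fin N ⊕ Fin N) ℝ) := by
    subst hB
    rw [Matrix.fromBlocks_multiply]
    have h1 : As * 1 + 1 * (-As) = (0 : Matrix (Fin N) (Fin N) ℝ) := by
      simp
    have h2 : (1 : Matrix (Fin N) (Fin N) ℝ) * As + (-As) * 1 = 0 := by simp
    rw [h1, h2, hsq]
    have : (-As) * (-As) = (k : ℝ) • (1 : Matrix (Fin N) (Fin N) ℝ) := by
      simp [hsq]
    rw [this]
    ext x y
    rcases x with i | i <;> rcases y with j | j <;>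
      simp [Matrix.fromBlocks, Matrix.one_apply, Matrix.smul_apply] <;> split_ifs <;> ring
  refine ⟨?_, ?_, ?_, hBsq, ?_⟩
  · -- symmetry
    subst hB
    rw [Matrix.IsSymm, Matrix.fromBlocks_transpose, hsymm, Matrix.transpose_neg, hsymm,
      Matrix.transpose_one]
  · intro v w
    subst hB
    rcases v with i | i <;> rcases w with j | j
    · by_cases h : G.Adj i j
      · rcases hadj i j h with h1 | h1 <;> simp [h1]
      · simp [hnadj i j h]
    · by_cases h : i = j <;> simp [Matrix.one_apply, h] <;> exact fun hc => h hc.symm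
    · by_cases h : i = j <;> simp [Matrix.one_apply, h] <;> exact fun hc => h hc.symm
    · by_cases h : G.Adj i j
      · rcases hadj i j h with h1 | h1 <;> simp [h1]
      · simp [hnadj i j h]
  · intro v
    have hdeg : ∀ i : Fin N, (Finset.univ.filter (fun j => As i j ≠ 0)).card = k := by
      intro i
      have : Finset.univ.filter (fun j => As i j ≠ 0) = G.neighborFinset i := by
        ext j
        simp [hAsne i j, SimpleGraph.mem_neighborFinset]
      rw [this]
      exact hreg i
    have hone : ∀ i : Fin N,
        (Finset.univ.filter (fun j : Fin N => (1 : Matrix (Fin N) (Fin N) ℝ) i j ≠ 0)).card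
          = 1 := by
      intro i
      have : Finset.univ.filter (fun j : Fin N => (1 : Matrix (Fin N) (Fin N) ℝ) i j ≠ 0)
          = {i} := by
        ext j
        by_cases h : i = j <;> simp [Matrix.one_apply, h] <;> exact fun hc => h hc.symm
      rw [this, Finset.card_singleton]
    subst hB
    rcases v with i | i
    · rw [card_filter_sum_aux]
      simp only [Matrix.fromBlocks_apply₁₁, Matrix.fromBlocks_apply₁₂]
      exact congrArg₂ (· + ·) (hdeg i) (hone i)
    · rw [card_filter_sum_aux]
      simp only [Matrix.fromBlocks_apply₂₁, Matrix.fromBlocks_apply₂₂]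
      have hneg : (Finset.univ.filter (fun j => (-As) i j ≠ 0)).card = k := by
        have : Finset.univ.filter (fun j => (-As) i j ≠ 0)
            = Finset.univ.filter (fun j => As i j ≠ 0) := by
          ext j; simp
        rw [this, hdeg i]
      exact (congrArg₂ (· + ·) (hone i) hneg).trans (Nat.add_comm 1 k)
  · -- spectral radius
    have heig : ∀ i, |hH.eigenvalues i| = Real.sqrt (k + 1) := by
      intro i
      set μ := hH.eigenvalues i with hμ
      set v := (hH.eigenvectorBasis i : EuclideanSpace ℝ (Fin N ⊕ Fin N)) with hv
      have hvne : (v : EuclideanSpace ℝ (Fin N ⊕ Fin N)) ≠ 0 :=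
        hH.eigenvectorBasis.orthonormal.ne_zero i
      have h1 : B *ᵥ ⇑v = μ • ⇑v := hH.mulVec_eigenvectorBasis i
      have h2 : (B * B) *ᵥ ⇑v = (μ * μ) • ⇑v := by
        rw [← Matrix.mulVec_mulVec, h1, Matrix.mulVec_smul, h1, smul_smul]
      rw [hBsq] at h2
      have h3 : ((k : ℝ) + 1) • (⇑v : (Fin N ⊕ Fin N) → ℝ) = (μ * μ) • ⇑v := by
        rw [← h2]
        simp [Matrix.smul_mulVec, Matrix.one_mulVec]
      have h4 : μ * μ = (k : ℝ) + 1 := by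
        have := sub_eq_zero.mpr h3
        rw [← sub_smul] at this
        have hvne' : (⇑v : (Fin N ⊕ Fin N) → ℝ) ≠ 0 := by
          intro hc
          apply hvne
          ext j
          exact congrFun hc j
        rcases smul_eq_zero.mp this with h | h
        · linarith
        · exact absurd h hvne'
      have : |μ| = Real.sqrt ((k : ℝ) + 1) := by
        rw [← Real.sqrt_sq_eq_abs, sq, h4]
      simpa using this
    rw [show (fun i => |hH.eigenvalues i|) = fun _ => Real.sqrt (k + 1) from funext heig]
    apply Finset.sup'_const
end

section
/- A connected signed graph Γ = (G,σ) is balanced (every cycle has positive sign) if and only if 0 is an eigenvalue of its Laplacian matrix L(Γ) = D(G) - A(Γ). -/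
open SimpleGraph Finset

private lemma walk_sign_pm {n : ℕ} {G : SimpleGraph (Fin n)} {s : Sym2 (Fin n) → ℝ}
    (hsign : ∀ e ∈ G.edgeSet, s e = 1 ∨ s e = -1)
    {u v : Fin n} (w : G.Walk u v) :
    (w.edges.map s).prod = 1 ∨ (w.edges.map s).prod = -1 := by
  induction w with
  | nil => left; simp
  | cons h p ih =>
    simp only [Walk.edges_cons, List.map_cons, List.prod_cons]
    rcases hsign _ (G.mem_edgeSet.mpr h) with h1 | h1 <;> rcases ih with h2 | h2 <;>
      simp [h1, h2]

private lemma path_loop_nil {n : ℕ} {G : SimpleGraph (Fin n)} {v : Fin n}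
    (p : G.Walk v v) (hp : p.IsPath) : p = Walk.nil := by
  cases p with
  | nil => rfl
  | cons h q =>
    rw [Walk.cons_isPath_iff] at hp
    exact absurd q.end_mem_support hp.2

private lemma closed_walk_sign {n : ℕ} {G : SimpleGraph (Fin n)} {s : Sym2 (Fin n) → ℝ}
    (hsign : ∀ e ∈ G.edgeSet, s e = 1 ∨ s e = -1)
    (hcyc : ∀ (u : Fin n) (w : G.Walk u u), w.IsCycle → (w.edges.map s).prod = 1) :
    ∀ (N : ℕ) (u : Fin n) (w : G.Walk u u), w.length ≤ N → (w.edges.map s).prod = 1 := by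
  intro N
  induction N with
  | zero =>
    intro u w hw
    have hnil : w = Walk.nil := Walk.nil_iff_eq_nil.mp (Walk.length_eq_zero_iff.mp (Nat.le_zero.mp hw))
    simp [hnil]
  | succ N ih =>
    intro u w hw
    by_cases hd : w.support.tail.Nodup
    · -- tail of support has no duplicates
      cases w with
      | nil => simp
      | @cons _ y _ h p =>
        have hsupp : p.support = (Walk.cons h p).support.tail := by simp
        have hpath : p.IsPath := (Walk.isPath_def p).mpr (by rw [hsupp]; exact hd)
        by_cases he : s(u, y) ∈ p.edges
        · -- the edge occurs again in p; p must be the single edge back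
          cases p with
          | nil => simp at he
          | @cons _ z _ h2 p2 =>
            rw [Walk.edges_cons, List.mem_cons] at he
            rcases he with he | he
            · -- s(u,y) = s(y,z)
              simp only [Sym2.eq, Sym2.rel_iff', Prod.mk.injEq, Prod.swap_prod_mk] at he
              obtain ⟨hu, -⟩ | ⟨huz, -⟩ := he
              · exact absurd hu h.ne
              · subst huz
                -- z = u : p2 is a loop path, hence nil
                rw [Walk.cons_isPath_iff] at hpath
                have hnil : p2 = Walk.nil := path_loop_nil p2 hpath.1
                subst hnil
                simp only [Walk.edges_cons, Walk.edges_nil, List.map_cons, List.map_nil,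
                  List.prod_cons, List.prod_nil, mul_one]
                have : s s(y, u) = s s(u, y) := by rw [Sym2.eq_swap]
                rw [this]
                rcases hsign _ (G.mem_edgeSet.mpr h) with h1 | h1 <;> rw [h1] <;> norm_num
            · -- edge in p2, so y ∈ p2.support, contradiction with path
              have : y ∈ p2.support := p2.snd_mem_support_of_mem_edges he
              rw [Walk.cons_isPath_iff] at hpath
              exact absurd this hpath.2
        · -- cons h p is a cycle
          exact hcyc u (Walk.cons h p) ((Walk.cons_isCycle_iff p h).mpr ⟨hpath, he⟩)
    · -- some vertex repeats in the tail
      obtain ⟨x, hx⟩ := List.exists_duplicate_iff_not_nodup.mpr hd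
      rw [List.duplicate_iff_two_le_count] at hx
      have hxs : x ∈ w.support := by
        apply List.mem_of_mem_tail
        exact List.count_pos_iff.mp (by omega)
      set c := w.rotate x hxs with hcdef
      have hprod : (c.edges.map s).prod = (w.edges.map s).prod :=
        (((w.rotate_edges x hxs).map s).perm).prod_eq
      have hlen : c.length = w.length := by
        have := ((w.rotate_edges x hxs).perm).length_eq
        rwa [Walk.length_edges, Walk.length_edges] at this
      have hcount : 2 ≤ c.support.tail.count x := by
        rw [((w.support_rotate x hxs).perm).count_eq]
        exact hx
      clear_value c
      cases c with
      | nil => simp at hcount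
      | @cons _ z _ hc2 pc =>
        have hpcsupp : pc.support = (Walk.cons hc2 pc).support.tail := by simp
        have hxp : x ∈ pc.support := by
          apply List.count_pos_iff.mp
          rw [hpcsupp]; omega
        set r1 := pc.takeUntil x hxp with hr1
        set r2 := pc.dropUntil x hxp with hr2
        have hspec : r1.append r2 = pc := pc.take_spec hxp
        have hcount1 : r1.support.count x = 1 := pc.count_support_takeUntil_eq_one hxp
        have hcount2 : 1 ≤ r2.support.tail.count x := by
          have : pc.support.count x = r1.support.count x + r2.support.tail.count x := by
            rw [← hspec, Walk.support_append, List.count_append]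
          rw [← hpcsupp] at hcount
          omega
        have hr2len : 1 ≤ r2.length := by
          rcases Nat.eq_zero_or_pos r2.length with h0 | h0
          · exfalso
            have : r2 = Walk.nil := Walk.nil_iff_eq_nil.mp (Walk.length_eq_zero_iff.mp h0)
            rw [this] at hcount2
            simp at hcount2
          · exact h0
        have hlensum : r1.length + r2.length = pc.length := by
          have := congrArg Walk.length hspec
          rwa [Walk.length_append] at this
        have hlc : pc.length + 1 ≤ N + 1 := by
          have := Walk.length_cons hc2 pc
          omega
        have h1 : ((Walk.cons hc2 r1).edges.map s).prod = 1 := by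
          apply ih
          rw [Walk.length_cons]
          omega
        have h2 : ((r2.edges.map s).prod) = 1 := by
          apply ih
          omega
        rw [← hprod]
        have hedges : (Walk.cons hc2 pc).edges = s(x, z) :: (r1.edges ++ r2.edges) := by
          rw [← hspec, Walk.edges_cons, Walk.edges_append]
        rw [hedges]
        simp only [List.map_cons, List.map_append, List.prod_cons, List.prod_append]
        simp only [Walk.edges_cons, List.map_cons, List.prod_cons] at h1
        rw [← mul_assoc, h1, h2, mul_one]

private lemma switching_exists {n : ℕ} {G : SimpleGraph (Fin n)} (hconn : G.Connected)
    {s : Sym2 (Fin n) → ℝ}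
    (hsign : ∀ e ∈ G.edgeSet, s e = 1 ∨ s e = -1)
    (hclosed : ∀ (u : Fin n) (w : G.Walk u u), (w.edges.map s).prod = 1) :
    ∃ θ : Fin n → ℝ, (∀ u, θ u = 1 ∨ θ u = -1) ∧
      ∀ i j, G.Adj i j → s s(i, j) = θ i * θ j := by
  obtain ⟨v0⟩ := hconn.nonempty
  have hreach : ∀ u, Nonempty (G.Walk v0 u) := fun u => hconn.preconnected v0 u
  refine ⟨fun u => (((hreach u).some.edges.map s)).prod,
    fun u => walk_sign_pm hsign _, ?_⟩
  intro i j hij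
  have hW := hclosed v0 ((hreach i).some.append (Walk.cons hij (hreach j).some.reverse))
  rw [Walk.edges_append, Walk.edges_cons, Walk.edges_reverse, List.map_append,
    List.prod_append, List.map_cons, List.prod_cons, List.map_reverse,
    List.prod_reverse] at hW
  rcases walk_sign_pm hsign (hreach i).some with h1 | h1 <;>
    rcases walk_sign_pm hsign (hreach j).some with h2 | h2 <;>
      (rw [h1, h2] at hW; dsimp only; rw [h1, h2]; linarith)

private lemma sum_ite_adj_const {n : ℕ} (G : SimpleGraph (Fin n)) [DecidableRel G.Adj]
    (i : Fin n) (c : ℝ) :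
    ∑ j, (if G.Adj i j then c else 0) = (G.degree i : ℝ) * c := by
  rw [show (∑ j, (if G.Adj i j then c else 0)) = ∑ j ∈ G.neighborFinset i, c by
    rw [neighborFinset_eq_filter, sum_filter]]
  rw [sum_const, card_neighborFinset_eq_degree, nsmul_eq_mul]

private lemma sum_ite_adj_const' {n : ℕ} (G : SimpleGraph (Fin n)) [DecidableRel G.Adj]
    (j : Fin n) (c : ℝ) :
    ∑ i, (if G.Adj i j then c else 0) = (G.degree j : ℝ) * c := by
  rw [show (∑ i, (if G.Adj i j then c else 0)) = ∑ i, (if G.Adj j i then c else 0) from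
    Finset.sum_congr rfl fun i _ => if_congr (G.adj_comm i j) rfl rfl]
  exact sum_ite_adj_const G j c

/-- Zaslavsky: A connected signed graph Γ = (G,σ) is balanced (every cycle
has positive sign, the sign of a cycle being the product of its edge signs) if and only if
0 is an eigenvalue of its Laplacian matrix L(Γ) = D(G) - A(Γ). -/
theorem stmt_15 {n : ℕ} (G : SimpleGraph (Fin n)) [DecidableRel G.Adj]
    (hconn : G.Connected)
    (s : Sym2 (Fin n) → ℝ)
    (hsign : ∀ e ∈ G.edgeSet, s e = 1 ∨ s e = -1)
    (A : Matrix (Fin n) (Fin n) ℝ)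
    (hA : ∀ i j, A i j = if G.Adj i j then s s(i, j) else 0)
    (L : Matrix (Fin n) (Fin n) ℝ)
    (hL : L = Matrix.diagonal (fun i => (G.degree i : ℝ)) - A) :
    (∀ (u : Fin n) (w : G.Walk u u), w.IsCycle → (w.edges.map s).prod = 1) ↔
      ∃ x : Fin n → ℝ, x ≠ 0 ∧ L.mulVec x = 0 := by
  have hmv : ∀ (x : Fin n → ℝ) (i : Fin n), A.mulVec x i = ∑ j, A i j * x j := by
    intro x i
    simp [Matrix.mulVec, dotProduct]
  constructor
  · -- balanced → 0 is an eigenvalue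
    intro hcyc
    obtain ⟨θ, hpm, hedge⟩ := switching_exists hconn hsign
      (fun u w => closed_walk_sign hsign hcyc w.length u w le_rfl)
    have hθsq : ∀ j, θ j * θ j = 1 := by
      intro j; rcases hpm j with h | h <;> rw [h] <;> norm_num
    refine ⟨θ, ?_, ?_⟩
    · intro h0
      obtain ⟨v0⟩ := hconn.nonempty
      have := congrFun h0 v0
      rcases hpm v0 with h | h <;> rw [h] at this <;> norm_num at this
    · funext i
      rw [hL, Matrix.sub_mulVec]
      simp only [Pi.sub_apply, Matrix.mulVec_diagonal, Pi.zero_apply]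
      have hAv : A.mulVec θ i = (G.degree i : ℝ) * θ i := by
        rw [hmv]
        calc ∑ j, A i j * θ j = ∑ j, (if G.Adj i j then θ i else 0) := by
              apply Finset.sum_congr rfl
              intro j _
              rw [hA]
              by_cases hadj : G.Adj i j
              · rw [if_pos hadj, if_pos hadj, hedge i j hadj, mul_assoc, hθsq j, mul_one]
              · rw [if_neg hadj, if_neg hadj, zero_mul]
          _ = (G.degree i : ℝ) * θ i := sum_ite_adj_const G i (θ i)
      rw [hAv]
      ring
  · -- 0 is an eigenvalue → balanced
    rintro ⟨x, hx0, hLx⟩ u w hwcyc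
    clear hwcyc
    have hAx : ∀ i, (∑ j, A i j * x j) = (G.degree i : ℝ) * x i := by
      intro i
      have h0 := congrFun hLx i
      rw [hL, Matrix.sub_mulVec] at h0
      simp only [Pi.sub_apply, Matrix.mulVec_diagonal, Pi.zero_apply] at h0
      rw [hmv] at h0
      linarith
    -- energy argument: every edge satisfies x i = s_e * x j
    have key : ∀ i j, G.Adj i j → x i = s s(i, j) * x j := by
      have h1 : ∀ i : Fin n, ∑ j, (if G.Adj i j then (x i - s s(i, j) * x j) ^ 2 else 0)
          = (∑ j, (if G.Adj i j then x j ^ 2 else 0)) - (G.degree i : ℝ) * x i ^ 2 := by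
        intro i
        have e1 : ∀ j, (if G.Adj i j then (x i - s s(i, j) * x j) ^ 2 else 0)
            = ((if G.Adj i j then x i ^ 2 else 0) + (if G.Adj i j then x j ^ 2 else 0))
              - 2 * (x i * (A i j * x j)) := by
          intro j
          rw [hA]
          by_cases hadj : G.Adj i j
          · simp only [if_pos hadj]
            rcases hsign _ (G.mem_edgeSet.mpr hadj) with hs | hs <;> rw [hs] <;> ring
          · simp only [if_neg hadj]; ring
        rw [Finset.sum_congr rfl (fun j _ => e1 j), Finset.sum_sub_distrib,
          Finset.sum_add_distrib, sum_ite_adj_const G i (x i ^ 2)]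
        have e2 : ∑ j, 2 * (x i * (A i j * x j)) = 2 * (x i * ((G.degree i : ℝ) * x i)) := by
          rw [← Finset.mul_sum, ← Finset.mul_sum, hAx i]
        rw [e2]
        ring
      have hE : ∑ i, ∑ j, (if G.Adj i j then (x i - s s(i, j) * x j) ^ 2 else 0) = 0 := by
        rw [Finset.sum_congr rfl (fun i _ => h1 i), Finset.sum_sub_distrib]
        have e3 : ∑ i, ∑ j, (if G.Adj i j then x j ^ 2 else 0)
            = ∑ i : Fin n, (G.degree i : ℝ) * x i ^ 2 := by
          rw [Finset.sum_comm]
          exact Finset.sum_congr rfl fun j _ => sum_ite_adj_const' G j (x j ^ 2)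
        rw [e3, sub_self]
      have hnn : ∀ (i j : Fin n), 0 ≤ (if G.Adj i j then (x i - s s(i, j) * x j) ^ 2 else 0) := by
        intro i j
        by_cases hadj : G.Adj i j
        · rw [if_pos hadj]; exact sq_nonneg _
        · rw [if_neg hadj]
      intro i j hadj
      have hz1 := (Finset.sum_eq_zero_iff_of_nonneg
        (fun i _ => Finset.sum_nonneg (fun j _ => hnn i j))).mp hE i (mem_univ i)
      have hz2 := (Finset.sum_eq_zero_iff_of_nonneg (fun j _ => hnn i j)).mp hz1 j (mem_univ j)
      rw [if_pos hadj] at hz2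
      have := (pow_eq_zero_iff two_ne_zero).mp hz2
      linarith [sub_eq_zero.mp this]
    -- |x| is constant along walks
    obtain ⟨i0, hi0⟩ : ∃ i, x i ≠ 0 := by
      by_contra hc
      push_neg at hc
      exact hx0 (funext fun i => hc i)
    have hsq : ∀ (a b : Fin n) (q : G.Walk a b), x a ^ 2 = x b ^ 2 := by
      intro a b q
      induction q with
      | nil => rfl
      | cons h p ih =>
        have hk := key _ _ h
        rcases hsign _ (G.mem_edgeSet.mpr h) with hs | hs <;>
          (rw [hk, hs, ← ih]; ring)
    have hwprod : ∀ (a b : Fin n) (q : G.Walk a b),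
        (q.edges.map s).prod * x i0 ^ 2 = x a * x b := by
      intro a b q
      induction q with
      | nil =>
        rename_i c
        have hreach : Nonempty (G.Walk i0 c) := hconn.preconnected i0 c
        have h := hsq i0 c hreach.some
        simp only [Walk.edges_nil, List.map_nil, List.prod_nil, one_mul]
        rw [h]
        ring
      | cons h p ih =>
        rw [Walk.edges_cons, List.map_cons, List.prod_cons, mul_assoc, ih, ← mul_assoc,
          ← key _ _ h]
    have hfin := hwprod u u w
    have hc2 : x i0 ^ 2 ≠ 0 := pow_ne_zero 2 hi0
    have hxu : x u * x u = x i0 ^ 2 := by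
      have hreach : Nonempty (G.Walk i0 u) := hconn.preconnected i0 u
      have h := hsq i0 u hreach.some
      rw [h]
      ring
    rw [hxu] at hfin
    exact mul_right_cancel₀ hc2 (by rw [hfin, one_mul])
end
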